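/- Let R be a nominal rewrite system that is E-terminating, and suppose R,E is E-confluent. Then for every term-in-context Δ ⊢ t, every R,E-normal form of t and every R/E-normal form of t (under Δ) are E-equal, if and only if the relation →R,E is E-coherent. -/

import Mathlib

namespace NominalNarrowing

/-- Atoms (object-level names). -/
abbrev Atom := ℕ
/-- (Meta-level) variables. -/
abbrev Var := ℕ

/-- A finite permutation of atoms, represented as a list of swaps. -/
abbrev Perm := List (Atom × Atom)

/-- Action of a single swap on an atom. -/
def swapAtom (p : Atom × Atom) (a : Atom) : Atom :=
  if a = p.1 then p.2 else if a = p.2 then p.1 else a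

/-- Action of a permutation (list of swaps) on an atom. -/
def permAtom (π : Perm) (a : Atom) : Atom := π.foldr swapAtom a

/-- Nominal terms over a signature `F`. -/
inductive Term (F : Type) where
  | atom : Atom → Term F
  | var  : Perm → Var → Term F
  | abs  : Atom → Term F → Term F
  | fn   : F → List (Term F) → Term F

variable {F : Type}

/-- Permutation action on terms. -/
def permTerm (π : Perm) : Term F → Term F
  | .atom a => .atom (permAtom π a)
  | .var π' X => .var (π ++ π') X
  | .abs a t => .abs (permAtom π a) (permTerm π t)
  | .fn f ts => .fn f (ts.attach.map fun x => permTerm π x.1)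
decreasing_by
  all_goals simp
  all_goals (have := List.sizeOf_lt_of_mem x.2; omega)

/-- Substitutions map variables to terms. -/
abbrev Subst (F : Type) := Var → Term F

/-- Substitution action on terms (possibly capturing). -/
def applySubst (θ : Subst F) : Term F → Term F
  | .atom a => .atom a
  | .var π X => permTerm π (θ X)
  | .abs a t => .abs a (applySubst θ t)
  | .fn f ts => .fn f (ts.attach.map fun x => applySubst θ x.1)
decreasing_by
  all_goals simp
  all_goals (have := List.sizeOf_lt_of_mem x.2; omega)

/-- The identity substitution. -/
def idSubst : Subst F := fun X => .var [] X

/-- Composition of substitutions: `X (compSubst σ τ) = (X σ) τ`. -/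
def compSubst (σ τ : Subst F) : Subst F := fun X => applySubst τ (σ X)

/-- Composition `θ₀θ₁…θ_{n-1}` of a sequence of substitutions. -/
def compAll (θseq : ℕ → Subst F) (n : ℕ) : Subst F :=
  ((List.range n).map θseq).foldr compSubst idSubst

/-- Atoms occurring in a term (including those in permutation moderations). -/
def Term.atoms : Term F → Finset Atom
  | .atom a => {a}
  | .var π _ => (π.map Prod.fst).toFinset ∪ (π.map Prod.snd).toFinset
  | .abs a t => insert a t.atoms
  | .fn _ ts => (ts.attach.map fun x => Term.atoms x.1).foldr (· ∪ ·) ∅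
decreasing_by
  all_goals simp
  all_goals (have := List.sizeOf_lt_of_mem x.2; omega)

/-- Variables occurring in a term. -/
def Term.vars : Term F → Finset Var
  | .atom _ => ∅
  | .var _ X => {X}
  | .abs _ t => t.vars
  | .fn _ ts => (ts.attach.map fun x => Term.vars x.1).foldr (· ∪ ·) ∅
decreasing_by
  all_goals simp
  all_goals (have := List.sizeOf_lt_of_mem x.2; omega)

/-- A freshness context: a finite set of primitive constraints `a#X`. -/
abbrev Ctx := Finset (Atom × Var)

def ctxAtoms (Δ : Ctx) : Finset Atom := Δ.image Prod.fst
def ctxVars (Δ : Ctx) : Finset Var := Δ.image Prod.snd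

/-- The freshness judgement `Δ ⊢ a # t`. -/
inductive Fresh (Δ : Ctx) : Atom → Term F → Prop
  | atom {a b : Atom} : a ≠ b → Fresh Δ a (.atom b)
  | var {π : Perm} {a : Atom} {X : Var} :
      (permAtom π.reverse a, X) ∈ Δ → Fresh Δ a (.var π X)
  | abs_same {a : Atom} {t : Term F} : Fresh Δ a (.abs a t)
  | abs_diff {a b : Atom} {t : Term F} : a ≠ b → Fresh Δ a t → Fresh Δ a (.abs b t)
  | fn {a : Atom} {f : F} {ts : List (Term F)} :
      (∀ t ∈ ts, Fresh Δ a t) → Fresh Δ a (.fn f ts)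

/-- The α-equivalence judgement `Δ ⊢ s ≈α t`. -/
inductive Aeq (Δ : Ctx) : Term F → Term F → Prop
  | atom (a : Atom) : Aeq Δ (.atom a) (.atom a)
  | var {π π' : Perm} {X : Var} :
      (∀ a : Atom, permAtom π a ≠ permAtom π' a → (a, X) ∈ Δ) →
      Aeq Δ (.var π X) (.var π' X)
  | fn {f : F} {ts ss : List (Term F)} :
      List.Forall₂ (Aeq Δ) ts ss → Aeq Δ (.fn f ts) (.fn f ss)
  | abs_same {a : Atom} {t s : Term F} : Aeq Δ t s → Aeq Δ (.abs a t) (.abs a s)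
  | abs_diff {a b : Atom} {t s : Term F} :
      a ≠ b → Aeq Δ t (permTerm [(a, b)] s) → Fresh Δ a s →
      Aeq Δ (.abs a t) (.abs b s)

/-- `SatCtx Δ' θ Δ` means `Δ' ⊢ Δθ`, i.e. `Δ' ⊢ a # Xθ` for each `a#X ∈ Δ`.
    (Equivalently, θ satisfies Δ with Δ'.) -/
def SatCtx (Δ' : Ctx) (θ : Subst F) (Δ : Ctx) : Prop :=
  ∀ p ∈ Δ, Fresh Δ' p.1 (θ p.2)

/-- A rule (or identity) in context: `Nab ⊢ l → r` (resp. `Nab ⊢ l ≈ r`). -/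
abbrev Rule (F : Type) := Ctx × Term F × Term F

/-- Permutation action on contexts. -/
def permCtx (π : Perm) (Δ : Ctx) : Ctx := Δ.image fun p => (permAtom π p.1, p.2)

/-- Permutation action on rules/identities. -/
def permRule (π : Perm) (r : Rule F) : Rule F :=
  (permCtx π r.1, permTerm π r.2.1, permTerm π r.2.2)

/-- An equivariant set of rules/identities. -/
def Equivariant (S : Set (Rule F)) : Prop := ∀ (π : Perm), ∀ r ∈ S, permRule π r ∈ S

/-- A set of identities closed under symmetry. -/
def SymmClosed (S : Set (Rule F)) : Prop := ∀ r ∈ S, ((r.1, r.2.2, r.2.1) : Rule F) ∈ S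

/-- Subterm of `t` at position `p` (positions as paths). -/
def subtermAt : List ℕ → Term F → Option (Term F)
  | [], t => some t
  | 0 :: p, .abs _ t => subtermAt p t
  | i :: p, .fn _ ts => (ts[i]?).bind fun u => subtermAt p u
  | _, _ => none

/-- Replace the subterm of `t` at position `p` by `new` (the paper's `C[new]`). -/
def replaceAt : List ℕ → Term F → Term F → Option (Term F)
  | [], _, new => some new
  | 0 :: p, .abs a t, new => (replaceAt p t new).map (Term.abs a)
  | i :: p, .fn f ts, new =>
      (ts[i]?).bind fun u => (replaceAt p u new).map fun u' => Term.fn f (ts.set i u')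
  | _, _, _ => none

/-- One-step equality `Δ ⊢ s ≈E t` generated by the identities `E`. -/
def EqStep (E : Set (Rule F)) (Δ : Ctx) (s t : Term F) : Prop :=
  ∃ ax ∈ E, ∃ (p : List ℕ) (θ : Subst F) (Γ : Ctx) (w w' : Term F),
    (∀ c ∈ Γ, c.1 ∉ ctxAtoms Δ ∪ s.atoms ∪ t.atoms) ∧
    SatCtx (Δ ∪ Γ) θ ax.1 ∧
    subtermAt p w = some (applySubst θ ax.2.1) ∧
    Aeq (Δ ∪ Γ) s w ∧
    replaceAt p w (applySubst θ ax.2.2) = some w' ∧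
    Aeq (Δ ∪ Γ) w' t

/-- The equational theory `Δ ⊢ s ≈E t` : reflexive-transitive closure of one-step
    equality (with α-equivalence embedded). -/
def EqE (E : Set (Rule F)) (Δ : Ctx) : Term F → Term F → Prop :=
  Relation.ReflTransGen (fun s t => EqStep E Δ s t ∨ Aeq Δ s t)

/-- Symmetric closure of a set of identities. -/
def symmCl (S : Set (Rule F)) : Set (Rule F) :=
  S ∪ {r | ∃ q ∈ S, r = ((q.1, q.2.2, q.2.1) : Rule F)}

/-- The equational theory `≈T` generated by `R ∪ E` together with α-equivalence. -/
def EqT (R E : Set (Rule F)) (Δ : Ctx) : Term F → Term F → Prop :=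
  EqE (symmCl (R ∪ E)) Δ

/-- Rewriting with a given rule at a given position, matching modulo `E`:
    the core of `Δ ⊢ s →R,E t`. -/
def RewAt (E : Set (Rule F)) (Δ : Ctx) (r : Rule F) (p : List ℕ) (s t : Term F) : Prop :=
  ∃ (s' u : Term F) (θ : Subst F),
    subtermAt p s = some s' ∧
    SatCtx Δ θ r.1 ∧
    EqE E Δ s' (applySubst θ r.2.1) ∧
    replaceAt p s (applySubst θ r.2.2) = some u ∧
    Aeq Δ u t

/-- Rewriting with a given rule at a given position, matching modulo α only:
    the core of plain nominal rewriting `Δ ⊢ s →R t`. -/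
def RewAtR (Δ : Ctx) (r : Rule F) (p : List ℕ) (s t : Term F) : Prop :=
  ∃ (s' u : Term F) (θ : Subst F),
    subtermAt p s = some s' ∧
    SatCtx Δ θ r.1 ∧
    Aeq Δ s' (applySubst θ r.2.1) ∧
    replaceAt p s (applySubst θ r.2.2) = some u ∧
    Aeq Δ u t

/-- Plain nominal rewriting `Δ ⊢ s →R t`. -/
def RewR (R : Set (Rule F)) (Δ : Ctx) (s t : Term F) : Prop :=
  ∃ r ∈ R, ∃ p : List ℕ, RewAtR Δ r p s t

/-- Nominal rewriting modulo `E`: `Δ ⊢ s →R,E t`. -/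
def RewRE (R E : Set (Rule F)) (Δ : Ctx) (s t : Term F) : Prop :=
  ∃ r ∈ R, ∃ p : List ℕ, RewAt E Δ r p s t

/-- The relation `→R/E  =  ≈E ∘ →R ∘ ≈E`. -/
def RewRmodE (R E : Set (Rule F)) (Δ : Ctx) (s t : Term F) : Prop :=
  ∃ s' t', EqE E Δ s s' ∧ RewR R Δ s' t' ∧ EqE E Δ t' t

/-- One-step nominal narrowing with a given rule at a given position, modulo `E`. -/
def NarrAt (E : Set (Rule F)) (Δ : Ctx) (r : Rule F) (p : List ℕ) (s : Term F)
    (θ : Subst F) (Δ' : Ctx) (t : Term F) : Prop :=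
  ∃ (s' u : Term F),
    subtermAt p s = some s' ∧
    SatCtx Δ' θ r.1 ∧
    SatCtx Δ' θ Δ ∧
    EqE E Δ' (applySubst θ s') (applySubst θ r.2.1) ∧
    replaceAt p s r.2.2 = some u ∧
    Aeq Δ' (applySubst θ u) t

/-- One-step nominal narrowing with a given rule at a given position (E = ∅, α only). -/
def NarrAtR (Δ : Ctx) (r : Rule F) (p : List ℕ) (s : Term F)
    (θ : Subst F) (Δ' : Ctx) (t : Term F) : Prop :=
  ∃ (s' u : Term F),
    subtermAt p s = some s' ∧
    SatCtx Δ' θ r.1 ∧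
    SatCtx Δ' θ Δ ∧
    Aeq Δ' (applySubst θ s') (applySubst θ r.2.1) ∧
    replaceAt p s r.2.2 = some u ∧
    Aeq Δ' (applySubst θ u) t

/-- One-step nominal `R,E`-narrowing `(Δ ⊢ s) ⤳θ (Δ' ⊢ t)`. -/
def NarrRE (R E : Set (Rule F)) (Δ : Ctx) (s : Term F) (θ : Subst F)
    (Δ' : Ctx) (t : Term F) : Prop :=
  ∃ r ∈ R, ∃ p : List ℕ, NarrAt E Δ r p s θ Δ' t

/-- One-step plain nominal narrowing (E = ∅). -/
def NarrR (R : Set (Rule F)) (Δ : Ctx) (s : Term F) (θ : Subst F)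
    (Δ' : Ctx) (t : Term F) : Prop :=
  ∃ r ∈ R, ∃ p : List ℕ, NarrAtR Δ r p s θ Δ' t

/-! ### Freshened variants and closed rules -/

def ruleAtoms (r : Rule F) : Finset Atom := ctxAtoms r.1 ∪ r.2.1.atoms ∪ r.2.2.atoms
def ruleVars (r : Rule F) : Finset Var := ctxVars r.1 ∪ r.2.1.vars ∪ r.2.2.vars

/-- Renaming of atoms and variables in a term. -/
def renameTerm (fa : Atom → Atom) (fv : Var → Var) : Term F → Term F
  | .atom a => .atom (fa a)
  | .var π X => .var (π.map fun p => (fa p.1, fa p.2)) (fv X)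
  | .abs a t => .abs (fa a) (renameTerm fa fv t)
  | .fn f ts => .fn f (ts.attach.map fun x => renameTerm fa fv x.1)
decreasing_by
  all_goals simp
  all_goals (have := List.sizeOf_lt_of_mem x.2; omega)

def renameCtx (fa : Atom → Atom) (fv : Var → Var) (Δ : Ctx) : Ctx :=
  Δ.image fun p => (fa p.1, fv p.2)

def renameRule (fa : Atom → Atom) (fv : Var → Var) (r : Rule F) : Rule F :=
  (renameCtx fa fv r.1, renameTerm fa fv r.2.1, renameTerm fa fv r.2.2)

/-- `r'` is a freshened variant of `r`, with fresh atoms/variables avoiding `A`/`V`. -/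
def IsFreshenedAway (r r' : Rule F) (A : Finset Atom) (V : Finset Var) : Prop :=
  ∃ (fa : Atom → Atom) (fv : Var → Var),
    Function.Injective fa ∧ Function.Injective fv ∧
    (∀ a ∈ ruleAtoms r, fa a ∉ A ∪ ruleAtoms r) ∧
    (∀ X ∈ ruleVars r, fv X ∉ V ∪ ruleVars r) ∧
    r' = renameRule fa fv r

/-- A rule (or axiom) `Nab ⊢ l → r` is closed: any freshened variant matches back. -/
def ClosedRule (r : Rule F) : Prop :=
  ∀ r' : Rule F, IsFreshenedAway r r' (ruleAtoms r) (ruleVars r) →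
    ∃ θ : Subst F,
      SatCtx (r.1 ∪ (ruleAtoms r') ×ˢ ruleVars r) θ r'.1 ∧
      Aeq (r.1 ∪ (ruleAtoms r') ×ˢ ruleVars r) (applySubst θ r'.2.1) r.2.1 ∧
      Aeq (r.1 ∪ (ruleAtoms r') ×ˢ ruleVars r) (applySubst θ r'.2.2) r.2.2

def ClosedSet (S : Set (Rule F)) : Prop := ∀ r ∈ S, ClosedRule r

/-- Closed rewriting at a rule/position, modulo `E`: uses a freshened variant of the
rule and the extended freshness context `Δ, A(R̂)#V(Δ,s,t)`. -/
def CRewAt (E : Set (Rule F)) (Δ : Ctx) (r : Rule F) (p : List ℕ) (s t : Term F) : Prop :=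
  ∃ r' : Rule F,
    IsFreshenedAway r r' (ctxAtoms Δ ∪ s.atoms ∪ t.atoms) (ctxVars Δ ∪ s.vars ∪ t.vars) ∧
    RewAt E (Δ ∪ (ruleAtoms r') ×ˢ (ctxVars Δ ∪ s.vars ∪ t.vars)) r' p s t

/-- Closed rewriting at a rule/position, modulo α only. -/
def CRewAtR (Δ : Ctx) (r : Rule F) (p : List ℕ) (s t : Term F) : Prop :=
  ∃ r' : Rule F,
    IsFreshenedAway r r' (ctxAtoms Δ ∪ s.atoms ∪ t.atoms) (ctxVars Δ ∪ s.vars ∪ t.vars) ∧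
    RewAtR (Δ ∪ (ruleAtoms r') ×ˢ (ctxVars Δ ∪ s.vars ∪ t.vars)) r' p s t

/-- One-step closed `R,E`-rewriting `Δ ⊢ s →c R,E t`. -/
def CRewRE (R E : Set (Rule F)) (Δ : Ctx) (s t : Term F) : Prop :=
  ∃ r ∈ R, ∃ p : List ℕ, CRewAt E Δ r p s t

/-- One-step closed nominal rewriting (E = ∅). -/
def CRewR (R : Set (Rule F)) (Δ : Ctx) (s t : Term F) : Prop :=
  ∃ r ∈ R, ∃ p : List ℕ, CRewAtR Δ r p s t

/-- Closed narrowing at a rule/position modulo `E`: conditions are checked in the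
extended context `Δ', A(R̂)#V(Δ,s,t)`. -/
def CNarrAt (E : Set (Rule F)) (Δ : Ctx) (r : Rule F) (p : List ℕ) (s : Term F)
    (θ : Subst F) (Δ' : Ctx) (t : Term F) : Prop :=
  ∃ r' : Rule F,
    IsFreshenedAway r r' (ctxAtoms Δ ∪ s.atoms ∪ t.atoms) (ctxVars Δ ∪ s.vars ∪ t.vars) ∧
    NarrAt E Δ r' p s θ (Δ' ∪ (ruleAtoms r') ×ˢ (ctxVars Δ ∪ s.vars ∪ t.vars)) t

/-- Closed narrowing at a rule/position, modulo α only. -/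
def CNarrAtR (Δ : Ctx) (r : Rule F) (p : List ℕ) (s : Term F)
    (θ : Subst F) (Δ' : Ctx) (t : Term F) : Prop :=
  ∃ r' : Rule F,
    IsFreshenedAway r r' (ctxAtoms Δ ∪ s.atoms ∪ t.atoms) (ctxVars Δ ∪ s.vars ∪ t.vars) ∧
    NarrAtR Δ r' p s θ (Δ' ∪ (ruleAtoms r') ×ˢ (ctxVars Δ ∪ s.vars ∪ t.vars)) t

/-- One-step closed `R,E`-narrowing `(Δ ⊢ s) ⤳c θ (Δ' ⊢ t)`. -/
def CNarrRE (R E : Set (Rule F)) (Δ : Ctx) (s : Term F) (θ : Subst F)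
    (Δ' : Ctx) (t : Term F) : Prop :=
  ∃ r ∈ R, ∃ p : List ℕ, CNarrAt E Δ r p s θ Δ' t

/-- One-step closed nominal narrowing (E = ∅). -/
def CNarrR (R : Set (Rule F)) (Δ : Ctx) (s : Term F) (θ : Subst F)
    (Δ' : Ctx) (t : Term F) : Prop :=
  ∃ r ∈ R, ∃ p : List ℕ, CNarrAtR Δ r p s θ Δ' t

/-! ### Normal forms and abstract properties -/

def NFRE (R E : Set (Rule F)) (Δ : Ctx) (t : Term F) : Prop := ¬ ∃ u, RewRE R E Δ t u
def NFRmodE (R E : Set (Rule F)) (Δ : Ctx) (t : Term F) : Prop := ¬ ∃ u, RewRmodE R E Δ t u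
def NFR (R : Set (Rule F)) (Δ : Ctx) (t : Term F) : Prop := ¬ ∃ u, RewR R Δ t u

/-- `R` is E-terminating: there is no infinite `→R/E` sequence. -/
def ETerminating (R E : Set (Rule F)) : Prop :=
  ∀ Δ : Ctx, ¬ ∃ f : ℕ → Term F, ∀ n, RewRmodE R E Δ (f n) (f (n + 1))

/-- `R` is E-confluent (confluence of `→R/E` modulo `E`). -/
def EConfluentRmodE (R E : Set (Rule F)) : Prop :=
  ∀ (Δ : Ctx) (s t u : Term F),
    Relation.ReflTransGen (RewRmodE R E Δ) s t →
    Relation.ReflTransGen (RewRmodE R E Δ) s u →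
    ∃ t' u', Relation.ReflTransGen (RewRmodE R E Δ) t t' ∧
      Relation.ReflTransGen (RewRmodE R E Δ) u u' ∧ EqE E Δ t' u'

/-- `R,E` is E-confluent (confluence of `→R,E` modulo `E`). -/
def EConfluentRE (R E : Set (Rule F)) : Prop :=
  ∀ (Δ : Ctx) (s t u : Term F),
    Relation.ReflTransGen (RewRE R E Δ) s t →
    Relation.ReflTransGen (RewRE R E Δ) s u →
    ∃ t' u', Relation.ReflTransGen (RewRE R E Δ) t t' ∧
      Relation.ReflTransGen (RewRE R E Δ) u u' ∧ EqE E Δ t' u'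

/-- `R` is E-convergent: E-confluent and E-terminating. -/
def EConvergent (R E : Set (Rule F)) : Prop := EConfluentRmodE R E ∧ ETerminating R E

/-- `→R,E` is E-coherent. -/
def ECoherent (R E : Set (Rule F)) : Prop :=
  ∀ (Δ : Ctx) (t₁ t₂ t₃ : Term F), EqE E Δ t₁ t₂ → RewRE R E Δ t₁ t₃ →
    ∃ t₄ t₅ t₆, Relation.ReflTransGen (RewRE R E Δ) t₃ t₄ ∧
      RewRE R E Δ t₂ t₅ ∧ Relation.ReflTransGen (RewRE R E Δ) t₅ t₆ ∧
      EqE E Δ t₄ t₆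

/-- `→R` is terminating. -/
def Terminating (R : Set (Rule F)) : Prop :=
  ∀ Δ : Ctx, ¬ ∃ f : ℕ → Term F, ∀ n, RewR R Δ (f n) (f (n + 1))

/-- `→R` is confluent (modulo α). -/
def Confluent (R : Set (Rule F)) : Prop :=
  ∀ (Δ : Ctx) (s t u : Term F),
    Relation.ReflTransGen (RewR R Δ) s t →
    Relation.ReflTransGen (RewR R Δ) s u →
    ∃ t' u', Relation.ReflTransGen (RewR R Δ) t t' ∧
      Relation.ReflTransGen (RewR R Δ) u u' ∧ Aeq Δ t' u'

/-- `R` is convergent: terminating and confluent. -/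
def Convergent (R : Set (Rule F)) : Prop := Terminating R ∧ Confluent R

/-! ### E-unification -/

/-- `(Δ',θ)` is an E-unifier of `(Nab ⊢ l)` and `(Δ ⊢ s)`. -/
def EUnifier (E : Set (Rule F)) (Nab : Ctx) (l : Term F) (Δ : Ctx) (s : Term F)
    (sol : Ctx × Subst F) : Prop :=
  SatCtx sol.1 sol.2 Nab ∧ SatCtx sol.1 sol.2 Δ ∧
  EqE E sol.1 (applySubst sol.2 l) (applySubst sol.2 s)

/-- `(Δ₁,θ₁) ≤E (Δ₂,θ₂)`: `(Δ₁,θ₁)` is more general than `(Δ₂,θ₂)`. -/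
def LeE (E : Set (Rule F)) (p q : Ctx × Subst F) : Prop :=
  ∃ θ' : Subst F, (∀ X : Var, EqE E q.1 (applySubst θ' (p.2 X)) (q.2 X)) ∧
    SatCtx q.1 θ' p.1

/-- `≤E` restricted to a finite set `V` of variables. -/
def LeEV (E : Set (Rule F)) (V : Finset Var) (p q : Ctx × Subst F) : Prop :=
  ∃ θ' : Subst F, (∀ X ∈ V, EqE E q.1 (applySubst θ' (p.2 X)) (q.2 X)) ∧
    SatCtx q.1 θ' p.1

/-- A complete E-unification algorithm exists: every E-unification problem has a
complete set of E-solutions. -/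
def CompleteEUnifAlg (E : Set (Rule F)) : Prop :=
  ∀ (Nab : Ctx) (l : Term F) (Δ : Ctx) (s : Term F),
    ∃ S : Set (Ctx × Subst F),
      (∀ sol ∈ S, EUnifier E Nab l Δ s sol) ∧
      ∀ sol, EUnifier E Nab l Δ s sol → ∃ p ∈ S, LeE E p sol

/-- `R ∪ E_α` is well-structured: `R` is E-convergent and a complete E-unification
algorithm exists. -/
def WellStructured (R E : Set (Rule F)) : Prop := EConvergent R E ∧ CompleteEUnifAlg E

/-- `θ` is normalised in `Δ` w.r.t. `→R,E`. -/
def NormalisedRE (R E : Set (Rule F)) (Δ : Ctx) (θ : Subst F) : Prop :=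
  ∀ X : Var, NFRE R E Δ (θ X)

/-- `θ` is normalised in `Δ` w.r.t. `→R`. -/
def NormalisedR (R : Set (Rule F)) (Δ : Ctx) (θ : Subst F) : Prop :=
  ∀ X : Var, NFR R Δ (θ X)

/-- The domain of a substitution. -/
def domSubst (θ : Subst F) : Set Var := {X | θ X ≠ Term.var [] X}

/-! ### Positions, basedness, innermost -/

/-- Ground (non-variable) positions of a term. -/
def groundPos (t : Term F) : Set (List ℕ) :=
  {p | ∃ u, subtermAt p t = some u ∧ ∀ (π : Perm) (X : Var), u ≠ Term.var π X}

/-- The update of the set of basic positions after a step at position `p`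
with a rule whose right-hand side is `rhs`. -/
def nextU (U : Set (List ℕ)) (p : List ℕ) (rhs : Term F) : Set (List ℕ) :=
  (U \ {q | q ∈ U ∧ p <+: q}) ∪ {q | ∃ q' ∈ groundPos rhs, q = p ++ q'}

/-- A (finite) derivation reducing at positions `pseq` with rules whose right-hand
sides are `rhs` is based on `U₀`. -/
def BasedSeq (U₀ : Set (List ℕ)) (n : ℕ) (pseq : ℕ → List ℕ) (rhs : ℕ → Term F) : Prop :=
  ∃ U : ℕ → Set (List ℕ), U 0 = U₀ ∧
    ∀ i < n, pseq i ∈ U i ∧ U (i + 1) = nextU (U i) (pseq i) (rhs i)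

/-- An infinite derivation based on `U₀` (for non-termination statements). -/
def BasedInf (U₀ : Set (List ℕ)) (pseq : ℕ → List ℕ) (rhs : ℕ → Term F) : Prop :=
  ∃ U : ℕ → Set (List ℕ), U 0 = U₀ ∧
    ∀ i, pseq i ∈ U i ∧ U (i + 1) = nextU (U i) (pseq i) (rhs i)

/-- A rewrite step at position `p` in `s` is innermost (no `→R` step strictly below). -/
def InnermostAt (R : Set (Rule F)) (Δ : Ctx) (p : List ℕ) (s : Term F) : Prop :=
  ∀ q : List ℕ, p <+: q → p ≠ q → ¬ ∃ r ∈ R, ∃ t, RewAtR Δ r q s t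

/-- A closed rewrite step at position `p` in `s` is innermost. -/
def CInnermostAt (R : Set (Rule F)) (Δ : Ctx) (p : List ℕ) (s : Term F) : Prop :=
  ∀ q : List ℕ, p <+: q → p ≠ q → ¬ ∃ r ∈ R, ∃ t, CRewAtR Δ r q s t


/-! ### Auxiliary infrastructure -/

section Aux
variable {F : Type}

theorem attach_map_eq (l : List (Term F)) {β : Type} (g : Term F → β) :
    l.attach.map (fun x => g x.1) = l.map g := List.attach_map_val

@[simp] theorem permTerm_atom (π : Perm) (a : Atom) :
    permTerm π (Term.atom a : Term F) = .atom (permAtom π a) := by rw [permTerm]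

@[simp] theorem permTerm_var (π π' : Perm) (X : Var) :
    permTerm π (Term.var π' X : Term F) = .var (π ++ π') X := by rw [permTerm]

@[simp] theorem permTerm_abs (π : Perm) (a : Atom) (t : Term F) :
    permTerm π (Term.abs a t) = .abs (permAtom π a) (permTerm π t) := by rw [permTerm]

@[simp] theorem permTerm_fn (π : Perm) (f : F) (ts : List (Term F)) :
    permTerm π (Term.fn f ts) = .fn f (ts.map (permTerm π)) := by
  rw [permTerm, attach_map_eq]

@[simp] theorem applySubst_atom (θ : Subst F) (a : Atom) :
    applySubst θ (Term.atom a : Term F) = .atom a := by rw [applySubst]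

@[simp] theorem applySubst_var (θ : Subst F) (π : Perm) (X : Var) :
    applySubst θ (Term.var π X : Term F) = permTerm π (θ X) := by rw [applySubst]

@[simp] theorem applySubst_abs (θ : Subst F) (a : Atom) (t : Term F) :
    applySubst θ (Term.abs a t) = .abs a (applySubst θ t) := by rw [applySubst]

@[simp] theorem applySubst_fn (θ : Subst F) (f : F) (ts : List (Term F)) :
    applySubst θ (Term.fn f ts) = .fn f (ts.map (applySubst θ)) := by
  rw [applySubst, attach_map_eq]

@[simp] theorem atoms_atom (a : Atom) : (Term.atom a : Term F).atoms = {a} := by rw [Term.atoms]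

@[simp] theorem atoms_var (π : Perm) (X : Var) :
    (Term.var π X : Term F).atoms = (π.map Prod.fst).toFinset ∪ (π.map Prod.snd).toFinset := by
  rw [Term.atoms]

@[simp] theorem atoms_abs (a : Atom) (t : Term F) :
    (Term.abs a t).atoms = insert a t.atoms := by rw [Term.atoms]

@[simp] theorem atoms_fn (f : F) (ts : List (Term F)) :
    (Term.fn f ts).atoms = ((ts.map Term.atoms).foldr (· ∪ ·) ∅) := by
  rw [Term.atoms, attach_map_eq]

@[simp] theorem vars_atom (a : Atom) : (Term.atom a : Term F).vars = ∅ := by rw [Term.vars]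

@[simp] theorem vars_var (π : Perm) (X : Var) : (Term.var π X : Term F).vars = {X} := by
  rw [Term.vars]

@[simp] theorem vars_abs (a : Atom) (t : Term F) : (Term.abs a t).vars = t.vars := by
  rw [Term.vars]

@[simp] theorem vars_fn (f : F) (ts : List (Term F)) :
    (Term.fn f ts).vars = ((ts.map Term.vars).foldr (· ∪ ·) ∅) := by
  rw [Term.vars, attach_map_eq]

/-- Custom induction principle for terms. -/
theorem Term.my_ind {P : Term F → Prop}
    (h1 : ∀ a, P (.atom a)) (h2 : ∀ π X, P (.var π X))
    (h3 : ∀ a t, P t → P (.abs a t))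
    (h4 : ∀ f ts, (∀ t ∈ ts, P t) → P (.fn f ts)) : ∀ t, P t
  | .atom a => h1 a
  | .var π X => h2 π X
  | .abs a t => h3 a t (Term.my_ind h1 h2 h3 h4 t)
  | .fn f ts => h4 f ts (fun t ht => Term.my_ind h1 h2 h3 h4 t)
decreasing_by
  all_goals simp
  all_goals (have := List.sizeOf_lt_of_mem ht; omega)

/-! ### permAtom lemmas -/

theorem permAtom_append (π π' : Perm) (a : Atom) :
    permAtom (π ++ π') a = permAtom π (permAtom π' a) := by
  simp [permAtom, List.foldr_append]

@[simp] theorem permAtom_nil (a : Atom) : permAtom [] a = a := rfl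

@[simp] theorem swapAtom_swapAtom (p : Atom × Atom) (a : Atom) :
    swapAtom p (swapAtom p a) = a := by
  unfold swapAtom
  by_cases h1 : a = p.1 <;> by_cases h2 : a = p.2 <;> simp_all

theorem permAtom_cons (p : Atom × Atom) (π : Perm) (a : Atom) :
    permAtom (p :: π) a = swapAtom p (permAtom π a) := rfl

theorem permAtom_reverse_right (π : Perm) (a : Atom) :
    permAtom π (permAtom π.reverse a) = a := by
  induction π generalizing a with
  | nil => rfl
  | cons p π ih =>
    rw [List.reverse_cons, permAtom_append, permAtom_cons]
    have h1 : permAtom [p] a = swapAtom p a := rfl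
    rw [h1, ih, swapAtom_swapAtom]

theorem permAtom_reverse_left (π : Perm) (a : Atom) :
    permAtom π.reverse (permAtom π a) = a := by
  have := permAtom_reverse_right π.reverse a
  rwa [List.reverse_reverse] at this

theorem permAtom_injective (π : Perm) : Function.Injective (permAtom π) := by
  intro a b h
  have := congrArg (permAtom π.reverse) h
  rwa [permAtom_reverse_left, permAtom_reverse_left] at this

theorem permAtom_swap (a b x : Atom) :
    permAtom [(a, b)] x = if x = a then b else if x = b then a else x := rfl

/-- An atom not occurring in a permutation's entries is fixed. -/
theorem permAtom_fix {π : Perm} {a : Atom}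
    (h : ∀ p ∈ π, a ≠ p.1 ∧ a ≠ p.2) : permAtom π a = a := by
  induction π with
  | nil => rfl
  | cons p π ih =>
    have hp := h p (by simp)
    have : permAtom π a = a := ih (fun q hq => h q (by simp [hq]))
    show swapAtom p (permAtom π a) = a
    rw [this]
    unfold swapAtom
    simp [hp.1, hp.2]

/-! ### permTerm lemmas -/

theorem permTerm_permTerm (π π' : Perm) (t : Term F) :
    permTerm π (permTerm π' t) = permTerm (π ++ π') t := by
  induction t using Term.my_ind with
  | h1 a => simp [permAtom_append]
  | h2 ρ X => simp
  | h3 a t ih => simp [permAtom_append, ih]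
  | h4 f ts ih =>
    simp only [permTerm_fn, List.map_map]
    congr 1
    exact List.map_congr_left (fun t ht => ih t ht)

theorem permTerm_nil (t : Term F) : permTerm [] t = t := by
  induction t using Term.my_ind with
  | h1 a => simp
  | h2 ρ X => simp
  | h3 a t ih => simp [ih]
  | h4 f ts ih =>
    simp only [permTerm_fn]
    conv_rhs => rw [← List.map_id ts]
    exact congrArg _ (List.map_congr_left (fun t ht => ih t ht))

theorem applySubst_permTerm (θ : Subst F) (π : Perm) (t : Term F) :
    applySubst θ (permTerm π t) = permTerm π (applySubst θ t) := by
  induction t using Term.my_ind with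
  | h1 a => simp
  | h2 ρ X => simp [permTerm_permTerm]
  | h3 a t ih => simp [ih]
  | h4 f ts ih =>
    simp only [permTerm_fn, applySubst_fn, List.map_map]
    congr 1
    exact List.map_congr_left (fun t ht => ih t ht)

theorem applySubst_applySubst (θ θ' : Subst F) (t : Term F) :
    applySubst θ' (applySubst θ t) = applySubst (fun X => applySubst θ' (θ X)) t := by
  induction t using Term.my_ind with
  | h1 a => simp
  | h2 ρ X => simp [applySubst_permTerm]
  | h3 a t ih => simp [ih]
  | h4 f ts ih =>
    simp only [applySubst_fn, List.map_map]
    congr 1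
    exact List.map_congr_left (fun t ht => ih t ht)

end Aux
/-! ### subterm/replace equations -/

section SubRepEq
variable {F : Type}

@[simp] theorem subtermAt_nil (t : Term F) : subtermAt [] t = some t := rfl
@[simp] theorem subtermAt_atom_cons (i : ℕ) (p : List ℕ) (a : Atom) :
    subtermAt (i::p) (Term.atom a : Term F) = none := by cases i <;> rfl
@[simp] theorem subtermAt_var_cons (i : ℕ) (p : List ℕ) (π : Perm) (X : Var) :
    subtermAt (i::p) (Term.var π X : Term F) = none := by cases i <;> rfl
@[simp] theorem subtermAt_abs_zero (p : List ℕ) (a : Atom) (t : Term F) :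
    subtermAt (0::p) (Term.abs a t) = subtermAt p t := rfl
@[simp] theorem subtermAt_abs_succ (j : ℕ) (p : List ℕ) (a : Atom) (t : Term F) :
    subtermAt ((j+1)::p) (Term.abs a t) = none := rfl
@[simp] theorem subtermAt_fn_cons (i : ℕ) (p : List ℕ) (f : F) (ts : List (Term F)) :
    subtermAt (i::p) (Term.fn f ts) = (ts[i]?).bind (subtermAt p) := by cases i <;> rfl

@[simp] theorem replaceAt_nil (t v : Term F) : replaceAt [] t v = some v := rfl
@[simp] theorem replaceAt_atom_cons (i : ℕ) (p : List ℕ) (a : Atom) (v : Term F) :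
    replaceAt (i::p) (Term.atom a : Term F) v = none := by cases i <;> rfl
@[simp] theorem replaceAt_var_cons (i : ℕ) (p : List ℕ) (π : Perm) (X : Var) (v : Term F) :
    replaceAt (i::p) (Term.var π X : Term F) v = none := by cases i <;> rfl
@[simp] theorem replaceAt_abs_zero (p : List ℕ) (a : Atom) (t v : Term F) :
    replaceAt (0::p) (Term.abs a t) v = (replaceAt p t v).map (Term.abs a) := rfl
@[simp] theorem replaceAt_abs_succ (j : ℕ) (p : List ℕ) (a : Atom) (t v : Term F) :
    replaceAt ((j+1)::p) (Term.abs a t) v = none := rfl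
@[simp] theorem replaceAt_fn_cons (i : ℕ) (p : List ℕ) (f : F) (ts : List (Term F)) (v : Term F) :
    replaceAt (i::p) (Term.fn f ts) v =
      (ts[i]?).bind fun u => (replaceAt p u v).map fun u' => Term.fn f (ts.set i u') := by
  cases i <;> rfl

end SubRepEq
/-! ### subterm/replace lemmas -/

section SubRep
variable {F : Type}

theorem List_set_self {α : Type} {l : List α} {i : ℕ} {a : α}
    (h : l[i]? = some a) : l.set i a = l := by
  induction l generalizing i with
  | nil => simp at h
  | cons x xs ih =>
    cases i with
    | zero => simp at h; simp [h]
    | succ j => simp at h ⊢; exact ih h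

theorem subtermAt_replaceAt {p : List ℕ} {s v s' : Term F}
    (h : replaceAt p s v = some s') : subtermAt p s' = some v := by
  induction p generalizing s s' with
  | nil => simp at h; cases h; simp
  | cons i p ih =>
    match s, i with
    | .atom a, _ => simp at h
    | .var π X, _ => simp at h
    | .abs a t, 0 =>
      simp only [replaceAt_abs_zero] at h
      rcases Option.map_eq_some_iff.1 h with ⟨u, hu, rfl⟩
      simpa using ih hu
    | .abs a t, (j+1) => simp at h
    | .fn f ts, i =>
      simp only [replaceAt_fn_cons] at h
      rcases Option.bind_eq_some_iff.1 h with ⟨u, hu, h2⟩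
      rcases Option.map_eq_some_iff.1 h2 with ⟨u', hu', rfl⟩
      simp only [subtermAt_fn_cons]
      have : (ts.set i u')[i]? = some u' := by
        rw [List.getElem?_set_self']; rw [hu]; rfl
      rw [this]
      simpa using ih hu'

theorem replaceAt_isSome {p : List ℕ} {s x : Term F}
    (h : subtermAt p s = some x) (v : Term F) : ∃ s', replaceAt p s v = some s' := by
  induction p generalizing s with
  | nil => exact ⟨v, by simp⟩
  | cons i p ih =>
    match s, i with
    | .atom a, _ => simp at h
    | .var π X, _ => simp at h
    | .abs a t, 0 =>
      simp only [subtermAt_abs_zero] at h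
      rcases ih h with ⟨u', hu'⟩
      exact ⟨.abs a u', by simp [hu']⟩
    | .abs a t, (j+1) => simp at h
    | .fn f ts, i =>
      simp only [subtermAt_fn_cons] at h
      rcases Option.bind_eq_some_iff.1 h with ⟨u, hu, h2⟩
      rcases ih h2 with ⟨u', hu'⟩
      exact ⟨.fn f (ts.set i u'), by simp [hu, hu']⟩

theorem replaceAt_self {p : List ℕ} {s x : Term F}
    (h : subtermAt p s = some x) : replaceAt p s x = some s := by
  induction p generalizing s with
  | nil => simp at h; cases h; simp
  | cons i p ih =>
    match s, i with
    | .atom a, _ => simp at h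
    | .var π X, _ => simp at h
    | .abs a t, 0 =>
      simp only [subtermAt_abs_zero] at h
      simp [ih h]
    | .abs a t, (j+1) => simp at h
    | .fn f ts, i =>
      simp only [subtermAt_fn_cons] at h
      rcases Option.bind_eq_some_iff.1 h with ⟨u, hu, h2⟩
      simp only [replaceAt_fn_cons, hu, Option.bind_some, ih h2, Option.map_some]
      rw [List_set_self hu]

theorem replace_replace {p : List ℕ} {s v s' : Term F}
    (h : replaceAt p s v = some s') (v' : Term F) :
    replaceAt p s' v' = replaceAt p s v' := by
  induction p generalizing s s' with
  | nil => simp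
  | cons i p ih =>
    match s, i with
    | .atom a, _ => simp at h
    | .var π X, _ => simp at h
    | .abs a t, 0 =>
      simp only [replaceAt_abs_zero] at h
      rcases Option.map_eq_some_iff.1 h with ⟨u, hu, rfl⟩
      simp [ih hu]
    | .abs a t, (j+1) => simp at h
    | .fn f ts, i =>
      simp only [replaceAt_fn_cons] at h
      rcases Option.bind_eq_some_iff.1 h with ⟨u, hu, h2⟩
      rcases Option.map_eq_some_iff.1 h2 with ⟨u', hu', rfl⟩
      have hget : (ts.set i u')[i]? = some u' := by
        rw [List.getElem?_set_self']; rw [hu]; rfl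
      simp only [replaceAt_fn_cons, hget, hu, Option.bind_some, ih hu']
      cases hrep : replaceAt p u v' with
      | none => rfl
      | some w => simp [List.set_set]

theorem subtermAt_append (p q : List ℕ) (s : Term F) :
    subtermAt (p ++ q) s = (subtermAt p s).bind (subtermAt q) := by
  induction p generalizing s with
  | nil => simp
  | cons i p ih =>
    match s, i with
    | .atom a, _ => simp
    | .var π X, _ => simp
    | .abs a t, 0 => simpa using ih t
    | .abs a t, (j+1) => simp
    | .fn f ts, i =>
      simp only [List.cons_append, subtermAt_fn_cons]
      cases h : ts[i]? with
      | none => simp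
      | some u => simp [ih u]

theorem replaceAt_append {p q : List ℕ} {s u v u' s' : Term F}
    (hsub : subtermAt p s = some u) (hq : replaceAt q u v = some u')
    (hp : replaceAt p s u' = some s') :
    replaceAt (p ++ q) s v = some s' := by
  induction p generalizing s s' with
  | nil =>
    simp at hsub hp; cases hsub; cases hp; simpa using hq
  | cons i p ih =>
    match s, i with
    | .atom a, _ => simp at hsub
    | .var π X, _ => simp at hsub
    | .abs a t, 0 =>
      simp only [subtermAt_abs_zero] at hsub
      simp only [replaceAt_abs_zero] at hp
      rcases Option.map_eq_some_iff.1 hp with ⟨w, hw, rfl⟩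
      simp [ih hsub hw]
    | .abs a t, (j+1) => simp at hsub
    | .fn f ts, i =>
      simp only [subtermAt_fn_cons] at hsub
      rcases Option.bind_eq_some_iff.1 hsub with ⟨w, hw, h2⟩
      simp only [replaceAt_fn_cons, hw, Option.bind_some] at hp
      rcases Option.map_eq_some_iff.1 hp with ⟨w', hw', rfl⟩
      simp [hw, ih h2 hw']

theorem subtermAt_permTerm {p : List ℕ} {t u : Term F} (π : Perm)
    (h : subtermAt p t = some u) : subtermAt p (permTerm π t) = some (permTerm π u) := by
  induction p generalizing t with
  | nil => simp at h; cases h; simp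
  | cons i p ih =>
    match t, i with
    | .atom a, _ => simp at h
    | .var π' X, _ => simp at h
    | .abs a t, 0 =>
      simp only [subtermAt_abs_zero] at h
      simpa using ih h
    | .abs a t, (j+1) => simp at h
    | .fn f ts, i =>
      simp only [subtermAt_fn_cons] at h
      rcases Option.bind_eq_some_iff.1 h with ⟨w, hw, h2⟩
      simp only [permTerm_fn, subtermAt_fn_cons, List.getElem?_map, hw, Option.map_some,
        Option.bind_some]
      exact ih h2

theorem subtermAt_applySubst {p : List ℕ} {t u : Term F} (θ : Subst F)
    (h : subtermAt p t = some u) : subtermAt p (applySubst θ t) = some (applySubst θ u) := by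
  induction p generalizing t with
  | nil => simp at h; cases h; simp
  | cons i p ih =>
    match t, i with
    | .atom a, _ => simp at h
    | .var π' X, _ => simp at h
    | .abs a t, 0 =>
      simp only [subtermAt_abs_zero] at h
      simpa using ih h
    | .abs a t, (j+1) => simp at h
    | .fn f ts, i =>
      simp only [subtermAt_fn_cons] at h
      rcases Option.bind_eq_some_iff.1 h with ⟨w, hw, h2⟩
      simp only [applySubst_fn, subtermAt_fn_cons, List.getElem?_map, hw, Option.map_some,
        Option.bind_some]
      exact ih h2

theorem replaceAt_permTerm {p : List ℕ} {t v t' : Term F} (π : Perm)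
    (h : replaceAt p t v = some t') :
    replaceAt p (permTerm π t) (permTerm π v) = some (permTerm π t') := by
  induction p generalizing t t' with
  | nil => simp at h; cases h; simp
  | cons i p ih =>
    match t, i with
    | .atom a, _ => simp at h
    | .var π' X, _ => simp at h
    | .abs a t, 0 =>
      simp only [replaceAt_abs_zero] at h
      rcases Option.map_eq_some_iff.1 h with ⟨u, hu, rfl⟩
      simp [ih hu]
    | .abs a t, (j+1) => simp at h
    | .fn f ts, i =>
      simp only [replaceAt_fn_cons] at h
      rcases Option.bind_eq_some_iff.1 h with ⟨u, hu, h2⟩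
      rcases Option.map_eq_some_iff.1 h2 with ⟨u', hu', rfl⟩
      simp only [permTerm_fn, replaceAt_fn_cons, List.getElem?_map, hu, Option.map_some,
        Option.bind_some, ih hu', List.map_set]

theorem replaceAt_applySubst {p : List ℕ} {t v t' : Term F} (θ : Subst F)
    (h : replaceAt p t v = some t') :
    replaceAt p (applySubst θ t) (applySubst θ v) = some (applySubst θ t') := by
  induction p generalizing t t' with
  | nil => simp at h; cases h; simp
  | cons i p ih =>
    match t, i with
    | .atom a, _ => simp at h
    | .var π' X, _ => simp at h
    | .abs a t, 0 =>
      simp only [replaceAt_abs_zero] at h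
      rcases Option.map_eq_some_iff.1 h with ⟨u, hu, rfl⟩
      simp [ih hu]
    | .abs a t, (j+1) => simp at h
    | .fn f ts, i =>
      simp only [replaceAt_fn_cons] at h
      rcases Option.bind_eq_some_iff.1 h with ⟨u, hu, h2⟩
      rcases Option.map_eq_some_iff.1 h2 with ⟨u', hu', rfl⟩
      simp only [applySubst_fn, replaceAt_fn_cons, List.getElem?_map, hu, Option.map_some,
        Option.bind_some, ih hu', List.map_set]

end SubRep
/-! ### Fresh and Aeq metatheory -/

section FreshAeq
variable {F : Type}

theorem forall₂_map₂ {R : Term F → Term F → Prop} {g₁ g₂ : Term F → Term F}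
    {ts : List (Term F)} (h : ∀ t ∈ ts, R (g₁ t) (g₂ t)) :
    List.Forall₂ R (ts.map g₁) (ts.map g₂) := by
  induction ts with
  | nil => exact .nil
  | cons x xs ih =>
    exact .cons (h x (by simp)) (ih (fun t ht => h t (by simp [ht])))

theorem fresh_perm_iff {Δ : Ctx} {a : Atom} (π : Perm) (t : Term F) :
    Fresh Δ a (permTerm π t) ↔ Fresh Δ (permAtom π.reverse a) t := by
  induction t using Term.my_ind generalizing a with
  | h1 b =>
    simp only [permTerm_atom]
    constructor
    · rintro h; cases h with | atom hne =>
      refine Fresh.atom (fun he => hne ?_)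
      rw [← permAtom_reverse_right π a, he]
    · rintro h; cases h with | atom hne =>
      refine Fresh.atom (fun he => hne ?_)
      rw [he, permAtom_reverse_left]
  | h2 ρ X =>
    simp only [permTerm_var]
    constructor
    · rintro h; cases h with | var hmem =>
      refine Fresh.var ?_
      rwa [List.reverse_append, permAtom_append] at hmem
    · rintro h; cases h with | var hmem =>
      refine Fresh.var ?_
      rwa [List.reverse_append, permAtom_append]
  | h3 b t ih =>
    simp only [permTerm_abs]
    constructor
    · rintro h; cases h with
      | abs_same =>
        have : permAtom π.reverse (permAtom π b) = b := permAtom_reverse_left π b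
        rw [this]; exact Fresh.abs_same
      | abs_diff hne hf =>
        refine Fresh.abs_diff (fun he => hne ?_) ((ih).1 hf)
        rw [← permAtom_reverse_right π a, he]
    · rintro h; cases h with
      | abs_same =>
        rw [permAtom_reverse_right]; exact Fresh.abs_same
      | abs_diff hne hf =>
        refine Fresh.abs_diff (fun he => hne ?_) ((ih).2 hf)
        rw [he, permAtom_reverse_left]
  | h4 f ts ih =>
    simp only [permTerm_fn]
    constructor
    · rintro h; cases h with | fn hall =>
      refine Fresh.fn (fun t ht => ?_)
      exact (ih t ht).1 (hall _ (List.mem_map_of_mem ht))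
    · rintro h; cases h with | fn hall =>
      refine Fresh.fn (fun t ht => ?_)
      rcases List.mem_map.1 ht with ⟨u, hu, rfl⟩
      exact (ih u hu).2 (hall u hu)

theorem aeq_refl (Δ : Ctx) (t : Term F) : Aeq Δ t t := by
  induction t using Term.my_ind with
  | h1 a => exact .atom a
  | h2 π X => exact .var (fun a h => absurd rfl h)
  | h3 a t ih => exact .abs_same ih
  | h4 f ts ih => exact .fn (List.forall₂_same.2 ih)

/-- size of a term ignoring suspended permutations -/
def tsize : Term F → ℕ
  | .atom _ => 1
  | .var _ _ => 1
  | .abs _ t => tsize t + 1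
  | .fn _ ts => (ts.attach.map fun x => tsize x.1).foldr (· + ·) 0 + 1
decreasing_by
  all_goals simp
  all_goals (have := List.sizeOf_lt_of_mem x.2; omega)

@[simp] theorem tsize_atom (a : Atom) : tsize (Term.atom a : Term F) = 1 := by rw [tsize]
@[simp] theorem tsize_var (π : Perm) (X : Var) : tsize (Term.var π X : Term F) = 1 := by rw [tsize]
@[simp] theorem tsize_abs (a : Atom) (t : Term F) : tsize (Term.abs a t) = tsize t + 1 := by
  rw [tsize]
@[simp] theorem tsize_fn (f : F) (ts : List (Term F)) :
    tsize (Term.fn f ts) = ((ts.map tsize).foldr (· + ·) 0) + 1 := by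
  rw [tsize, attach_map_eq]

theorem tsize_mem_le {t : Term F} {ts : List (Term F)} (h : t ∈ ts) :
    tsize t ≤ (ts.map tsize).foldr (· + ·) 0 := by
  induction ts with
  | nil => simp at h
  | cons x xs ih =>
    rcases List.mem_cons.1 h with rfl | h
    · simp only [List.map_cons, List.foldr_cons]; omega
    · have := ih h; simp only [List.map_cons, List.foldr_cons]; omega

@[simp] theorem tsize_permTerm (π : Perm) (t : Term F) : tsize (permTerm π t) = tsize t := by
  induction t using Term.my_ind with
  | h1 a => simp
  | h2 ρ X => simp
  | h3 a t ih => simp [ih]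
  | h4 f ts ih =>
    simp only [permTerm_fn, tsize_fn, List.map_map]
    congr 2
    exact List.map_congr_left (fun t ht => ih t ht)

theorem tsize_pos (t : Term F) : 0 < tsize t := by
  cases t <;> simp

theorem fresh_atom_inv {Δ : Ctx} {a b : Atom} (h : Fresh Δ a (Term.atom b : Term F)) :
    a ≠ b := by cases h with | atom h => exact h

theorem fresh_var_inv {Δ : Ctx} {a : Atom} {π : Perm} {X : Var}
    (h : Fresh Δ a (Term.var π X : Term F)) : (permAtom π.reverse a, X) ∈ Δ := by
  cases h with | var h => exact h

theorem fresh_abs_inv {Δ : Ctx} {a b : Atom} {t : Term F} (hne : a ≠ b)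
    (h : Fresh Δ a (Term.abs b t)) : Fresh Δ a t := by
  cases h with
  | abs_same => exact absurd rfl hne
  | abs_diff _ h => exact h

theorem fresh_fn_inv {Δ : Ctx} {a : Atom} {f : F} {ts : List (Term F)}
    (h : Fresh Δ a (Term.fn f ts)) : ∀ t ∈ ts, Fresh Δ a t := by
  cases h with | fn h => exact h

theorem aeq_tsize_aux :
    ∀ n, ∀ {Δ : Ctx} {s t : Term F}, tsize s ≤ n → Aeq Δ s t → tsize s = tsize t := by
  intro n
  induction n with
  | zero =>
    intro Δ s t hs _
    have := tsize_pos s; omega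
  | succ n ih =>
    intro Δ s t hs h
    cases h with
    | atom => rfl
    | var _ => simp
    | fn hf =>
      simp only [tsize_fn] at hs ⊢
      have key : ∀ (ts ss : List (Term F)), List.Forall₂ (Aeq Δ) ts ss →
          (∀ x ∈ ts, tsize x ≤ n) →
          ((ts.map tsize).foldr (· + ·) 0) = ((ss.map tsize).foldr (· + ·) 0) := by
        intro ts ss hf2
        induction hf2 with
        | nil => intro _; rfl
        | cons hx hrest ih2 =>
          intro hb
          simp only [List.map_cons, List.foldr_cons]
          rw [ih (hb _ (by simp)) hx, ih2 (fun x hx2 => hb _ (by simp [hx2]))]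
      have := key _ _ hf (fun x hx => by have := tsize_mem_le hx; omega)
      omega
    | abs_same h1 =>
      simp only [tsize_abs] at hs ⊢
      rw [ih (by omega) h1]
    | abs_diff hne h1 h2 =>
      simp only [tsize_abs] at hs ⊢
      have := ih (by omega) h1
      rw [tsize_permTerm] at this
      omega

theorem aeq_tsize {Δ : Ctx} {s t : Term F} (h : Aeq Δ s t) : tsize s = tsize t :=
  aeq_tsize_aux (tsize s) le_rfl h

theorem swapAtom_pair_comm (a b x : Atom) : swapAtom (a, b) x = swapAtom (b, a) x := by
  unfold swapAtom; dsimp only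
  by_cases h1 : x = a <;> by_cases h2 : x = b <;> simp_all

/-- `l ∘ (a b) = (l a, l b) ∘ l` as actions. -/
theorem perm_swap_conj (l : Perm) (a b x : Atom) :
    permAtom l (swapAtom (a, b) x) = swapAtom (permAtom l a, permAtom l b) (permAtom l x) := by
  by_cases h1 : x = a
  · subst h1; simp [swapAtom]
  · by_cases h2 : x = b
    · subst h2
      have g : permAtom l x ≠ permAtom l a := fun h => h1 (permAtom_injective l h)
      simp [swapAtom, h1, g]
    · have g1 : permAtom l x ≠ permAtom l a := fun h => h1 (permAtom_injective l h)
      have g2 : permAtom l x ≠ permAtom l b := fun h => h2 (permAtom_injective l h)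
      simp [swapAtom, h1, h2, g1, g2]

/-- Two permutations that differ only at atoms fresh for `u` give α-equivalent results. -/
theorem perm_ds_aeq {Δ : Ctx} {l₁ l₂ : Perm} {u : Term F}
    (h : ∀ a, permAtom l₁ a ≠ permAtom l₂ a → Fresh Δ a u) :
    Aeq Δ (permTerm l₁ u) (permTerm l₂ u) := by
  induction u using Term.my_ind generalizing l₁ l₂ with
  | h1 b =>
    simp only [permTerm_atom]
    by_cases he : permAtom l₁ b = permAtom l₂ b
    · rw [he]; exact .atom _
    · exfalso; have := h b he; cases this with | atom hne => exact hne rfl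
  | h2 ρ X =>
    simp only [permTerm_var]
    refine Aeq.var (fun a ha => ?_)
    rw [permAtom_append, permAtom_append] at ha
    have := h (permAtom ρ a) ha
    cases this with | var hmem =>
    rwa [permAtom_reverse_left] at hmem
  | h3 b u ih =>
    simp only [permTerm_abs]
    by_cases he : permAtom l₁ b = permAtom l₂ b
    · rw [he]
      refine Aeq.abs_same (ih (fun a ha => ?_))
      have hab : a ≠ b := fun hh => ha (hh ▸ he)
      exact fresh_abs_inv hab (h a ha)
    · refine Aeq.abs_diff he ?_ ?_
      · rw [permTerm_permTerm]
        refine ih (fun a ha => ?_)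
        have hcons : ∀ x, permAtom ([(permAtom l₁ b, permAtom l₂ b)] ++ l₂) x
            = swapAtom (permAtom l₁ b, permAtom l₂ b) (permAtom l₂ x) := by
          intro x; rw [permAtom_append]; rfl
        by_cases hab : a = b
        · exfalso
          apply ha
          subst hab
          rw [hcons]
          unfold swapAtom
          simp [Ne.symm he]
        · have key : permAtom l₁ a ≠ permAtom l₂ a := by
            intro hcontra
            apply ha
            rw [hcons, ← hcontra]
            have g1 : permAtom l₁ a ≠ permAtom l₁ b := fun hh => hab (permAtom_injective _ hh)
            have g2 : permAtom l₁ a ≠ permAtom l₂ b := by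
              intro hh
              rw [hcontra] at hh
              exact hab (permAtom_injective _ hh)
            unfold swapAtom; simp [g1, g2]
          exact fresh_abs_inv hab (h a key)
      · rw [fresh_perm_iff]
        have heb : permAtom l₂.reverse (permAtom l₁ b) ≠ b := by
          intro hh
          apply he
          rw [← permAtom_reverse_right l₂ (permAtom l₁ b), hh]
        have hkey : permAtom l₁ (permAtom l₂.reverse (permAtom l₁ b))
            ≠ permAtom l₂ (permAtom l₂.reverse (permAtom l₁ b)) := by
          rw [permAtom_reverse_right]
          intro hh
          exact heb (permAtom_injective l₁ hh)
        exact fresh_abs_inv heb (h _ hkey)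
  | h4 f ts ih =>
    simp only [permTerm_fn]
    refine Aeq.fn (forall₂_map₂ (fun t ht => ih t ht (fun a ha => ?_)))
    have hf := h a ha
    cases hf with | fn hall => exact hall t ht

end FreshAeq
/-! ### The main Aeq bundle: equivariance, symmetry, transitivity, freshness preservation -/

section AeqMain
variable {F : Type}

theorem permAtom_single (p : Atom × Atom) (x : Atom) : permAtom [p] x = swapAtom p x := rfl

theorem aeq_main :
    ∀ n : ℕ, ∀ {Δ : Ctx} {s t : Term F}, tsize s ≤ n → Aeq Δ s t →
      ((∀ l₁ l₂ : Perm, (∀ x, permAtom l₁ x = permAtom l₂ x) →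
          Aeq Δ (permTerm l₁ s) (permTerm l₂ t))
       ∧ Aeq Δ t s
       ∧ (∀ u, Aeq Δ t u → Aeq Δ s u)
       ∧ (∀ a, Fresh Δ a s → Fresh Δ a t)) := by
  intro n
  induction n with
  | zero =>
    intro Δ s t hs _
    exact absurd hs (by have := tsize_pos s; omega)
  | succ n ih =>
    intro Δ s t hs h
    cases h with
    | atom a =>
      refine ⟨?_, .atom a, fun u h' => h', fun a₀ hf => hf⟩
      intro l₁ l₂ hl
      simp only [permTerm_atom, hl a]
      exact .atom _
    | var hd =>
      rename_i π π' X
      refine ⟨?_, ?_, ?_, ?_⟩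
      · intro l₁ l₂ hl
        simp only [permTerm_var]
        refine .var (fun a ha => ?_)
        rw [permAtom_append, permAtom_append, hl] at ha
        exact hd a (fun hc => ha (by rw [hc]))
      · exact .var (fun a ha => hd a (Ne.symm ha))
      · intro u h'
        cases h' with
        | var hd' =>
          refine .var (fun a ha => ?_)
          by_cases h1 : permAtom π a = permAtom π' a
          · exact hd' a (h1 ▸ ha)
          · exact hd a h1
      · intro a hf
        have hmem := fresh_var_inv hf
        refine Fresh.var ?_
        by_cases heq : permAtom π'.reverse a = permAtom π.reverse a
        · rw [heq]; exact hmem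
        · refine hd _ (fun hc => heq ?_)
          rw [permAtom_reverse_right] at hc
          calc permAtom π'.reverse a
              = permAtom π.reverse (permAtom π (permAtom π'.reverse a)) :=
                (permAtom_reverse_left _ _).symm
            _ = permAtom π.reverse a := by rw [hc]
    | fn hf =>
      rename_i f ts ss
      have hts : ∀ x ∈ ts, tsize x ≤ n := by
        intro x hx
        have h1 := tsize_mem_le hx
        simp only [tsize_fn] at hs; omega
      have key : ∀ (as bs : List (Term F)), List.Forall₂ (Aeq Δ) as bs →
          (∀ x ∈ as, tsize x ≤ n) →
          ((∀ l₁ l₂ : Perm, (∀ x, permAtom l₁ x = permAtom l₂ x) →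
              List.Forall₂ (Aeq Δ) (as.map (permTerm l₁)) (bs.map (permTerm l₂)))
           ∧ List.Forall₂ (Aeq Δ) bs as
           ∧ (∀ cs, List.Forall₂ (Aeq Δ) bs cs → List.Forall₂ (Aeq Δ) as cs)
           ∧ (∀ a, (∀ x ∈ as, Fresh Δ a x) → (∀ y ∈ bs, Fresh Δ a y))) := by
        intro as bs h2
        induction h2 with
        | nil =>
          intro _
          refine ⟨fun _ _ _ => .nil, .nil, fun cs h3 => ?_, fun a _ y hy => by simp at hy⟩
          cases h3; exact .nil
        | cons hx hrest ih2 =>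
          rename_i x y xs ys
          intro hb
          have hhd : tsize x ≤ n := hb x (by simp)
          have htl : ∀ z ∈ xs, tsize z ≤ n := fun z hz => hb z (by simp [hz])
          have IHhd := ih hhd hx
          have IHtl := ih2 htl
          refine ⟨?_, .cons IHhd.2.1 IHtl.2.1, ?_, ?_⟩
          · intro l₁ l₂ hl
            exact .cons (IHhd.1 l₁ l₂ hl) (IHtl.1 l₁ l₂ hl)
          · intro cs h3
            cases h3 with
            | cons hy hys => exact .cons (IHhd.2.2.1 _ hy) (IHtl.2.2.1 _ hys)
          · intro a hall y hy
            rcases List.mem_cons.1 hy with rfl | hy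
            · exact IHhd.2.2.2 a (hall x (by simp))
            · exact IHtl.2.2.2 a (fun z hz2 => hall z (by simp [hz2])) _ hy
      have K := key _ _ hf hts
      refine ⟨?_, .fn K.2.1, ?_, ?_⟩
      · intro l₁ l₂ hl
        simp only [permTerm_fn]
        exact .fn (K.1 l₁ l₂ hl)
      · intro u h'
        cases h' with
        | fn hf' => exact .fn (K.2.2.1 _ hf')
      · intro a hfr
        exact .fn (K.2.2.2 a (fresh_fn_inv hfr))
    | abs_same h1 =>
      rename_i a t₁ s₁
      have hst : tsize t₁ ≤ n := by simp only [tsize_abs] at hs; omega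
      refine ⟨?_, .abs_same (ih hst h1).2.1, ?_, ?_⟩
      · intro l₁ l₂ hl
        simp only [permTerm_abs, hl a]
        exact .abs_same ((ih hst h1).1 l₁ l₂ hl)
      · intro u h'
        cases h' with
        | abs_same h2 => exact .abs_same ((ih hst h1).2.2.1 _ h2)
        | abs_diff hne h2 h3 => exact .abs_diff hne ((ih hst h1).2.2.1 _ h2) h3
      · intro a₀ hfr
        cases hfr with
        | abs_same => exact .abs_same
        | abs_diff hne hf₁ => exact .abs_diff hne ((ih hst h1).2.2.2 a₀ hf₁)
    | abs_diff hab h1 h2 =>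
      rename_i a b t₁ s₁
      have hst : tsize t₁ ≤ n := by simp only [tsize_abs] at hs; omega
      have hss : tsize s₁ ≤ n := by
        have := aeq_tsize h1; rw [tsize_permTerm] at this; omega
      have hsp : tsize (permTerm [(a, b)] s₁) ≤ n := by rwa [tsize_permTerm]
      refine ⟨?_, ?_, ?_, ?_⟩
      · -- equivariance
        intro l₁ l₂ hl
        simp only [permTerm_abs]
        have hne2 : permAtom l₁ a ≠ permAtom l₂ b := by
          intro hc
          rw [hl a] at hc
          exact hab (permAtom_injective l₂ hc)
        refine .abs_diff hne2 ?_ ?_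
        · rw [permTerm_permTerm]
          have e1 : Aeq Δ (permTerm l₁ t₁) (permTerm (l₁ ++ [(a, b)]) s₁) := by
            have := (ih hst h1).1 l₁ l₁ (fun _ => rfl)
            rwa [permTerm_permTerm] at this
          have hext : ∀ x, permAtom (l₁ ++ [(a, b)]) x
              = permAtom ([(permAtom l₁ a, permAtom l₂ b)] ++ l₂) x := by
            intro x
            rw [permAtom_append, permAtom_append, permAtom_single, permAtom_single,
              perm_swap_conj, ← hl b, ← hl x]
          have e2 : Aeq Δ (permTerm (l₁ ++ [(a, b)]) s₁)
              (permTerm ([(permAtom l₁ a, permAtom l₂ b)] ++ l₂) s₁) :=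
            perm_ds_aeq (fun x hx => absurd (hext x) hx)
          have : tsize (permTerm l₁ t₁) ≤ n := by rwa [tsize_permTerm]
          exact (ih this e1).2.2.1 _ e2
        · rw [fresh_perm_iff, hl a, permAtom_reverse_left]
          exact h2
      · -- symmetry
        have hsym : Aeq Δ (permTerm [(a, b)] s₁) t₁ := (ih hst h1).2.1
        refine .abs_diff (Ne.symm hab) ?_ ?_
        · have h3 := (ih hsp hsym).1 [(b, a)] [(b, a)] (fun _ => rfl)
          rw [permTerm_permTerm] at h3
          have e0 : Aeq Δ (permTerm [] s₁) (permTerm ([(b, a)] ++ [(a, b)]) s₁) := by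
            refine perm_ds_aeq (fun x hx => absurd ?_ hx)
            rw [permAtom_append, permAtom_single, permAtom_single, permAtom_nil,
              swapAtom_pair_comm b a, swapAtom_swapAtom]
          rw [permTerm_nil] at e0
          exact (ih hss e0).2.2.1 _ h3
        · have h5 : Fresh Δ b (permTerm [(a, b)] s₁) := by
            rw [fresh_perm_iff]
            have : permAtom [(a, b)].reverse b = a := by
              rw [List.reverse_singleton, permAtom_single]
              unfold swapAtom
              simp [Ne.symm hab]
            rw [this]; exact h2
          exact (ih hsp hsym).2.2.2 b h5
      · -- transitivity
        intro u h'
        cases h' with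
        | abs_same h3 =>
          refine .abs_diff hab ?_ ((ih hss h3).2.2.2 a h2)
          have h4 := (ih hss h3).1 [(a, b)] [(a, b)] (fun _ => rfl)
          exact (ih hst h1).2.2.1 _ h4
        | abs_diff hbc h3 h4 =>
          rename_i c u₁
          by_cases hac : a = c
          · subst hac
            have h5 := (ih hss h3).1 [(a, b)] [(a, b)] (fun _ => rfl)
            rw [permTerm_permTerm] at h5
            have h6 := (ih hst h1).2.2.1 _ h5
            have e0 : Aeq Δ (permTerm ([(a, b)] ++ [(b, a)]) u₁) (permTerm [] u₁) := by
              refine perm_ds_aeq (fun x hx => absurd ?_ hx)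
              rw [permAtom_append, permAtom_single, permAtom_single, permAtom_nil,
                swapAtom_pair_comm b a, swapAtom_swapAtom]
            rw [permTerm_nil] at e0
            exact .abs_same ((ih hst h6).2.2.1 _ e0)
          · -- a ≠ c
            have hfa : Fresh Δ a u₁ := by
              have := (ih hss h3).2.2.2 a h2
              rw [fresh_perm_iff] at this
              have heq : permAtom [(b, c)].reverse a = a := by
                rw [List.reverse_singleton, permAtom_single]
                unfold swapAtom
                simp [hab, hac]
              rwa [heq] at this
            refine .abs_diff hac ?_ hfa
            have h5 := (ih hss h3).1 [(a, b)] [(a, b)] (fun _ => rfl)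
            rw [permTerm_permTerm] at h5
            have h6 := (ih hst h1).2.2.1 _ h5
            have e : Aeq Δ (permTerm ([(a, b)] ++ [(b, c)]) u₁) (permTerm [(a, c)] u₁) := by
              refine perm_ds_aeq (fun x hx => ?_)
              by_cases hxa : x = a
              · subst hxa; exact hfa
              · by_cases hxb : x = b
                · subst hxb; exact h4
                · exfalso; apply hx
                  rw [permAtom_append, permAtom_single, permAtom_single, permAtom_single]
                  by_cases hxc : x = c
                  · subst hxc
                    unfold swapAtom
                    simp [hxa, hxb, Ne.symm hbc, Ne.symm hac]
                  · unfold swapAtom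
                    simp [hxa, hxb, hxc]
            exact (ih hst h6).2.2.1 _ e
      · -- freshness preservation
        intro a₀ hfr
        cases hfr with
        | abs_same => exact .abs_diff hab h2
        | abs_diff hne hf₁ =>
          have h5 := (ih hst h1).2.2.2 a₀ hf₁
          rw [fresh_perm_iff] at h5
          by_cases hb : a₀ = b
          · subst hb; exact .abs_same
          · have heq : permAtom [(a, b)].reverse a₀ = a₀ := by
              rw [List.reverse_singleton, permAtom_single]
              unfold swapAtom
              simp [hne, hb]
            rw [heq] at h5
            exact .abs_diff hb h5

theorem aeq_symm {Δ : Ctx} {s t : Term F} (h : Aeq Δ s t) : Aeq Δ t s :=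
  (aeq_main (tsize s) le_rfl h).2.1

theorem aeq_trans {Δ : Ctx} {s t u : Term F} (h1 : Aeq Δ s t) (h2 : Aeq Δ t u) : Aeq Δ s u :=
  (aeq_main (tsize s) le_rfl h1).2.2.1 u h2

theorem aeq_perm {Δ : Ctx} {s t : Term F} (h : Aeq Δ s t) (l : Perm) :
    Aeq Δ (permTerm l s) (permTerm l t) :=
  (aeq_main (tsize s) le_rfl h).1 l l (fun _ => rfl)

theorem fresh_aeq {Δ : Ctx} {s t : Term F} (h : Aeq Δ s t) {a : Atom} (hf : Fresh Δ a s) :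
    Fresh Δ a t :=
  (aeq_main (tsize s) le_rfl h).2.2.2 a hf

theorem forall₂_set {R : Term F → Term F → Prop} (hR : ∀ t, R t t) {ts : List (Term F)}
    {i : ℕ} {w₁ w₂ : Term F} (h : R w₁ w₂) :
    List.Forall₂ R (ts.set i w₁) (ts.set i w₂) := by
  induction ts generalizing i with
  | nil => simp only [List.set_nil]; exact .nil
  | cons x xs ih =>
    cases i with
    | zero =>
      simp only [List.set]
      exact .cons h (List.forall₂_same.2 (fun y _ => hR y))
    | succ j =>
      simp only [List.set]
      exact .cons (hR x) ih

theorem aeq_replace₂ {Δ : Ctx} {p : List ℕ} {s v₁ v₂ s₁ s₂ : Term F} (hv : Aeq Δ v₁ v₂)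
    (h1 : replaceAt p s v₁ = some s₁) (h2 : replaceAt p s v₂ = some s₂) : Aeq Δ s₁ s₂ := by
  induction p generalizing s s₁ s₂ with
  | nil =>
    simp only [replaceAt_nil, Option.some.injEq] at h1 h2
    subst h1; subst h2; exact hv
  | cons i p ih =>
    match s, i with
    | .atom a, _ => simp at h1
    | .var π X, _ => simp at h1
    | .abs a t, 0 =>
      simp only [replaceAt_abs_zero] at h1 h2
      rcases Option.map_eq_some_iff.1 h1 with ⟨u₁, hu₁, rfl⟩
      rcases Option.map_eq_some_iff.1 h2 with ⟨u₂, hu₂, rfl⟩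
      exact .abs_same (ih hu₁ hu₂)
    | .abs a t, (j+1) => simp at h1
    | .fn f ts, i =>
      simp only [replaceAt_fn_cons] at h1 h2
      rcases Option.bind_eq_some_iff.1 h1 with ⟨u, hu, h1'⟩
      rcases Option.bind_eq_some_iff.1 h2 with ⟨u', hu', h2'⟩
      cases hu.symm.trans hu'
      rcases Option.map_eq_some_iff.1 h1' with ⟨w₁, hw₁, rfl⟩
      rcases Option.map_eq_some_iff.1 h2' with ⟨w₂, hw₂, rfl⟩
      exact .fn (forall₂_set (aeq_refl Δ) (ih hw₁ hw₂))

end AeqMain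
/-! ### Basic EqE properties -/

section EqEBasic
variable {F : Type} {E : Set (Rule F)}

theorem aeq_eqE {Δ : Ctx} {s t : Term F} (h : Aeq Δ s t) : EqE E Δ s t :=
  Relation.ReflTransGen.single (Or.inr h)

theorem eqE_refl {Δ : Ctx} (t : Term F) : EqE E Δ t t := Relation.ReflTransGen.refl

theorem eqE_trans {Δ : Ctx} {s t u : Term F} (h1 : EqE E Δ s t) (h2 : EqE E Δ t u) :
    EqE E Δ s u := Relation.ReflTransGen.trans h1 h2

theorem eqStep_symm (hEsymm : SymmClosed E) {Δ : Ctx} {s t : Term F}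
    (h : EqStep E Δ s t) : EqStep E Δ t s := by
  obtain ⟨ax, haxE, p, θ, Γ, w, w', hΓ, hsat, hsub, haw, hrep, haw'⟩ := h
  refine ⟨(ax.1, ax.2.2, ax.2.1), hEsymm ax haxE, p, θ, Γ, w', w, ?_, hsat,
    subtermAt_replaceAt hrep, aeq_symm haw', ?_, aeq_symm haw⟩
  · intro c hc
    have := hΓ c hc
    simp only [Finset.mem_union] at this ⊢
    tauto
  · rw [replace_replace hrep]
    exact replaceAt_self hsub

theorem eqE_symm (hEsymm : SymmClosed E) {Δ : Ctx} {s t : Term F}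
    (h : EqE E Δ s t) : EqE E Δ t s := by
  have hsym : Symmetric (fun s t : Term F => EqStep E Δ s t ∨ Aeq Δ s t) := by
    intro a b hab
    exact hab.elim (fun h1 => Or.inl (eqStep_symm hEsymm h1)) (fun h2 => Or.inr (aeq_symm h2))
  unfold EqE at h ⊢
  induction h with
  | refl => exact Relation.ReflTransGen.refl
  | tail _ hbc ih => exact Relation.ReflTransGen.head (hsym hbc) ih

end EqEBasic
/-! ### Disjoint swap systems -/

section Swaps
variable {F : Type}

/-- A list of swaps whose atoms are pairwise distinct. -/
def SwapsOK : Perm → Prop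
  | [] => True
  | (a, b) :: l => a ≠ b ∧ (∀ p ∈ l, a ≠ p.1 ∧ a ≠ p.2 ∧ b ≠ p.1 ∧ b ≠ p.2) ∧ SwapsOK l

theorem swapsOK_val {LL : Perm} (h : SwapsOK LL) :
    ∀ p ∈ LL, permAtom LL p.1 = p.2 ∧ permAtom LL p.2 = p.1 := by
  induction LL with
  | nil => intro p hp; simp at hp
  | cons q LL ih =>
    obtain ⟨a, b⟩ := q
    obtain ⟨hab, hdisj, hok⟩ := h
    intro p hp
    rcases List.mem_cons.1 hp with rfl | hp
    · constructor
      · have h1 : permAtom LL a = a :=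
          permAtom_fix (fun r hr => ⟨(hdisj r hr).1, (hdisj r hr).2.1⟩)
        rw [permAtom_cons, h1]
        unfold swapAtom; simp
      · have h1 : permAtom LL b = b :=
          permAtom_fix (fun r hr => ⟨(hdisj r hr).2.2.1, (hdisj r hr).2.2.2⟩)
        rw [permAtom_cons, h1]
        unfold swapAtom; simp [Ne.symm hab]
    · have h1 := ih hok p hp
      have hd := hdisj p hp
      constructor
      · rw [permAtom_cons, h1.1]
        unfold swapAtom
        simp [Ne.symm hd.1, Ne.symm hd.2.1, Ne.symm hd.2.2.1, Ne.symm hd.2.2.2]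
      · rw [permAtom_cons, h1.2]
        unfold swapAtom
        simp [Ne.symm hd.1, Ne.symm hd.2.1, Ne.symm hd.2.2.1, Ne.symm hd.2.2.2]

theorem swapsOK_invol {LL : Perm} (h : SwapsOK LL) (a : Atom) :
    permAtom LL (permAtom LL a) = a := by
  by_cases hmem : ∃ p ∈ LL, a = p.1 ∨ a = p.2
  · rcases hmem with ⟨p, hp, rfl | rfl⟩
    · rw [(swapsOK_val h p hp).1, (swapsOK_val h p hp).2]
    · rw [(swapsOK_val h p hp).2, (swapsOK_val h p hp).1]
  · push_neg at hmem
    have hfix : permAtom LL a = a :=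
      permAtom_fix (fun p hp => ⟨(hmem p hp).1, (hmem p hp).2⟩)
    rw [hfix, hfix]

theorem perm_invol_reverse {LL : Perm} (hinv : ∀ a, permAtom LL (permAtom LL a) = a)
    (a : Atom) : permAtom LL.reverse a = permAtom LL a :=
  permAtom_injective LL (by rw [permAtom_reverse_right, hinv])

theorem permAtom_eq_or_mem (ρ : Perm) (a : Atom) :
    permAtom ρ a = a ∨ ∃ p ∈ ρ, permAtom ρ a = p.1 ∨ permAtom ρ a = p.2 := by
  induction ρ with
  | nil => left; rfl
  | cons q ρ ih =>
    rw [permAtom_cons]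
    by_cases h1 : permAtom ρ a = q.1
    · right
      refine ⟨q, by simp, ?_⟩
      rw [h1]; unfold swapAtom; simp
    · by_cases h2 : permAtom ρ a = q.2
      · right
        refine ⟨q, by simp, ?_⟩
        rw [h2]
        unfold swapAtom
        by_cases hq : q.2 = q.1 <;> simp [hq]
      · have hsw : swapAtom q (permAtom ρ a) = permAtom ρ a := by
          unfold swapAtom; simp [h1, h2]
        rw [hsw]
        rcases ih with h | ⟨p, hp, hor⟩
        · left; exact h
        · right; exact ⟨p, by simp [hp], hor⟩

theorem not_mem_var_atoms {ρ : Perm} {X : Var} {z : Atom}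
    (h : z ∉ (Term.var ρ X : Term F).atoms) : ∀ p ∈ ρ, z ≠ p.1 ∧ z ≠ p.2 := by
  intro p hp
  rw [atoms_var] at h
  simp only [Finset.mem_union, List.mem_toFinset, List.mem_map, not_or, not_exists] at h
  push_neg at h
  exact ⟨fun hz => h.1 p hp hz.symm, fun hz => h.2 p hp hz.symm⟩

theorem mem_var_atoms_fst {ρ : Perm} {X : Var} {p : Atom × Atom} (hp : p ∈ ρ) :
    p.1 ∈ (Term.var ρ X : Term F).atoms := by
  rw [atoms_var]
  simp only [Finset.mem_union, List.mem_toFinset, List.mem_map]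
  exact Or.inl ⟨p, hp, rfl⟩

theorem mem_var_atoms_snd {ρ : Perm} {X : Var} {p : Atom × Atom} (hp : p ∈ ρ) :
    p.2 ∈ (Term.var ρ X : Term F).atoms := by
  rw [atoms_var]
  simp only [Finset.mem_union, List.mem_toFinset, List.mem_map]
  exact Or.inr ⟨p, hp, rfl⟩

theorem mem_foldr_union {l : List (Finset Atom)} {s : Finset Atom} (hs : s ∈ l) :
    s ⊆ l.foldr (· ∪ ·) ∅ := by
  induction l with
  | nil => simp at hs
  | cons x xs ih =>
    rcases List.mem_cons.1 hs with rfl | hs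
    · simp only [List.foldr_cons]; exact Finset.subset_union_left
    · simp only [List.foldr_cons]
      exact (ih hs).trans Finset.subset_union_right

theorem atoms_subset_fn {t : Term F} {f : F} {ts : List (Term F)} (h : t ∈ ts) :
    t.atoms ⊆ (Term.fn f ts).atoms := by
  rw [atoms_fn]
  exact mem_foldr_union (List.mem_map_of_mem h)

theorem vars_subset_fn {t : Term F} {f : F} {ts : List (Term F)} (h : t ∈ ts) :
    t.vars ⊆ (Term.fn f ts).vars := by
  rw [vars_fn]
  exact mem_foldr_union (List.mem_map_of_mem h)

end Swaps

/-! ### The ω-renaming setup -/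

/-- Packaging of a triple of swap systems used for renaming the fresh atoms of
an equality step. -/
structure OS where
  σ : Perm
  ν : Perm
  ι : Perm
  Bs : Finset Atom
  C1 : Finset Atom
  C2 : Finset Atom
  V : Finset Var
  Δ₀ : Ctx
  Δ₁ : Ctx
  hσB : ∀ a ∈ Bs, permAtom σ a ∈ C1
  hσσ : ∀ a, permAtom σ (permAtom σ a) = a
  hσfix : ∀ a, a ∉ Bs → a ∉ C1 → permAtom σ a = a
  hνB : ∀ a ∈ Bs, permAtom ν a ∈ C2
  hνν : ∀ a, permAtom ν (permAtom ν a) = a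
  hνfix : ∀ a, a ∉ Bs → a ∉ C2 → permAtom ν a = a
  hιν : ∀ a ∈ Bs, permAtom ι (permAtom ν a) = permAtom σ a
  hιι : ∀ a, permAtom ι (permAtom ι a) = a
  hιfix : ∀ a, a ∉ C1 → a ∉ C2 → permAtom ι a = a
  hC1 : ∀ a ∈ C1, a ∉ Bs ∧ a ∉ C2
  hΔ : ∀ c ∈ Δ₀, c.1 ∉ Bs → c ∈ Δ₁
  hCV : ∀ a X, (a ∈ C1 ∨ a ∈ C2) → X ∈ V → (a, X) ∈ Δ₁

namespace OS
variable {F : Type} (S : OS)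

/-- The junk-moderation substitution. -/
def ω : Subst F := fun X => Term.var S.ν X

theorem fresh_omega : ∀ (u : Term F) {d : Atom}, Fresh S.Δ₀ d u → d ∉ S.C1 → d ∉ S.C2 →
    (∀ z ∈ u.atoms, z ∉ S.C1 ∧ z ∉ S.C2) → (u.vars ⊆ S.V) →
    Fresh S.Δ₁ d (applySubst (S.ω : Subst F) u) := by
  intro u
  induction u using Term.my_ind with
  | h1 e =>
    intro d hfr _ _ _ _
    simp only [applySubst_atom]
    exact Fresh.atom (fresh_atom_inv hfr)
  | h2 ρ X' =>
    intro d hfr hd1 hd2 hat hv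
    have hmem := fresh_var_inv hfr
    simp only [applySubst_var, ω, permTerm_var]
    refine Fresh.var ?_
    rw [List.reverse_append, permAtom_append]
    set c := permAtom ρ.reverse d with hc
    have hcC : c ∉ S.C1 ∧ c ∉ S.C2 := by
      rcases permAtom_eq_or_mem ρ.reverse d with h | ⟨p, hp, hor⟩
      · rw [hc, h]; exact ⟨hd1, hd2⟩
      · rw [List.mem_reverse] at hp
        rcases hor with h | h
        · rw [hc, h]; exact hat _ (mem_var_atoms_fst hp)
        · rw [hc, h]; exact hat _ (mem_var_atoms_snd hp)
    rw [perm_invol_reverse S.hνν]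
    by_cases hcB : c ∈ S.Bs
    · exact S.hCV _ _ (Or.inr (S.hνB c hcB)) (hv (by simp))
    · rw [S.hνfix c hcB hcC.2]
      exact S.hΔ _ hmem hcB
  | h3 e u' ih =>
    intro d hfr hd1 hd2 hat hv
    simp only [applySubst_abs]
    by_cases hde : d = e
    · subst hde; exact Fresh.abs_same
    · refine Fresh.abs_diff hde (ih (fresh_abs_inv hde hfr) hd1 hd2 ?_ ?_)
      · intro z hz; exact hat z (by simp [hz])
      · intro z hz; exact hv (by simpa using hz)
  | h4 f ts ih =>
    intro d hfr hd1 hd2 hat hv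
    simp only [applySubst_fn]
    refine Fresh.fn (fun t ht => ?_)
    rcases List.mem_map.1 ht with ⟨u', hu', rfl⟩
    refine ih u' hu' (fresh_fn_inv hfr u' hu') hd1 hd2 ?_ ?_
    · intro z hz; exact hat z (atoms_subset_fn hu' hz)
    · exact (vars_subset_fn hu').trans hv

theorem fresh_super : ∀ (u : Term F) {c : Atom}, c ∈ S.C1 →
    (∀ z ∈ u.atoms, z ∉ S.C1 ∧ z ∉ S.C2) → (u.vars ⊆ S.V) →
    Fresh S.Δ₁ c (applySubst (S.ω : Subst F) u) := by
  intro u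
  induction u using Term.my_ind with
  | h1 e =>
    intro c hcC1 hat _
    simp only [applySubst_atom]
    exact Fresh.atom (fun he => (hat e (by simp)).1 (he ▸ hcC1))
  | h2 ρ X' =>
    intro c hcC1 hat hv
    simp only [applySubst_var, ω, permTerm_var]
    refine Fresh.var ?_
    rw [List.reverse_append, permAtom_append]
    have hfix : permAtom ρ.reverse c = c := by
      refine permAtom_fix (fun p hp => ?_)
      rw [List.mem_reverse] at hp
      exact ⟨fun hz => (hat _ (mem_var_atoms_fst hp)).1 (hz ▸ hcC1),
        fun hz => (hat _ (mem_var_atoms_snd hp)).1 (hz ▸ hcC1)⟩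
    rw [hfix, perm_invol_reverse S.hνν, S.hνfix c (S.hC1 c hcC1).1 (S.hC1 c hcC1).2]
    exact S.hCV _ _ (Or.inl hcC1) (hv (by simp))
  | h3 e u' ih =>
    intro c hcC1 hat hv
    simp only [applySubst_abs]
    have hce : c ≠ e := fun he => (hat e (by simp)).1 (he ▸ hcC1)
    refine Fresh.abs_diff hce (ih hcC1 ?_ ?_)
    · intro z hz; exact hat z (by simp [hz])
    · intro z hz; exact hv (by simpa using hz)
  | h4 f ts ih =>
    intro c hcC1 hat hv
    simp only [applySubst_fn]
    refine Fresh.fn (fun t ht => ?_)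
    rcases List.mem_map.1 ht with ⟨u', hu', rfl⟩
    exact ih u' hu' hcC1 (fun z hz => hat z (atoms_subset_fn hu' hz))
      ((vars_subset_fn hu').trans hv)

/-- The central renaming lemma: an α-equivalence against an instance can be
transported to the ω-renamed instance under the renamed context. -/
theorem omega : ∀ (t₀ : Term F) {u₂ : Term F} (Ms Mt : Perm),
    Aeq S.Δ₀ u₂ (permTerm Ms t₀) →
    (∀ z, permAtom Mt z = permAtom S.σ (permAtom Ms (permAtom S.ι z))) →
    (∀ z ∈ u₂.atoms, z ∉ S.Bs ∧ z ∉ S.C1 ∧ z ∉ S.C2) →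
    (∀ z ∈ t₀.atoms, z ∉ S.C1 ∧ z ∉ S.C2) →
    (∀ z, (z ∈ S.C1 ∨ z ∈ S.C2) → permAtom Ms z = z) →
    (∀ z, z ∉ S.C1 → z ∉ S.C2 → permAtom Ms z ∉ S.C1 ∧ permAtom Ms z ∉ S.C2) →
    (t₀.vars ⊆ S.V) →
    Aeq S.Δ₁ u₂ (permTerm Mt (applySubst (S.ω : Subst F) t₀)) := by
  intro t₀
  induction t₀ using Term.my_ind with
  | h1 c =>
    intro u₂ Ms Mt h hR1 hu ht hMsA hMsB hV
    rw [permTerm_atom] at h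
    cases h
    simp only [applySubst_atom, permTerm_atom]
    have hcC : c ∉ S.C1 ∧ c ∉ S.C2 := ht c (by simp)
    have hmC := hMsB c hcC.1 hcC.2
    have hmB : permAtom Ms c ∉ S.Bs := (hu _ (by simp)).1
    have : permAtom Mt c = permAtom Ms c := by
      rw [hR1, S.hιfix c hcC.1 hcC.2, S.hσfix _ hmB hmC.1]
    rw [this]
    exact Aeq.atom _
  | h2 ρ₁ X =>
    intro u₂ Ms Mt h hR1 hu ht hMsA hMsB hV
    rw [permTerm_var] at h
    cases h with | var hd =>
    rename_i ρᵤ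
    simp only [applySubst_var, ω, permTerm_var]
    refine Aeq.var (fun a hdiff => ?_)
    rw [permAtom_append, permAtom_append] at hdiff
    have hXV : X ∈ S.V := hV (by simp)
    by_cases ha1 : a ∈ S.C1
    · exact S.hCV a X (Or.inl ha1) hXV
    by_cases ha2 : a ∈ S.C2
    · exact S.hCV a X (Or.inr ha2) hXV
    by_cases haB : a ∈ S.Bs
    · exfalso
      apply hdiff
      have hνa : permAtom S.ν a ∈ S.C2 := S.hνB a haB
      have hρν : permAtom ρ₁ (permAtom S.ν a) = permAtom S.ν a := by
        refine permAtom_fix (fun p hp => ?_)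
        exact ⟨fun hz => (ht _ (mem_var_atoms_fst hp)).2 (hz ▸ hνa),
          fun hz => (ht _ (mem_var_atoms_snd hp)).2 (hz ▸ hνa)⟩
      have hρᵤ : permAtom ρᵤ a = a := by
        refine permAtom_fix (fun p hp => ?_)
        exact ⟨fun hz => (hu _ (mem_var_atoms_fst hp)).1 (hz ▸ haB),
          fun hz => (hu _ (mem_var_atoms_snd hp)).1 (hz ▸ haB)⟩
      rw [hρᵤ, hρν, hR1, S.hιν a haB, hMsA _ (Or.inl (S.hσB a haB)), S.hσσ]
    · -- a not in Bs, C1, C2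
      have hνa : permAtom S.ν a = a := S.hνfix a haB ha2
      rw [hνa] at hdiff
      have hyC : permAtom ρ₁ a ∉ S.C1 ∧ permAtom ρ₁ a ∉ S.C2 := by
        rcases permAtom_eq_or_mem ρ₁ a with hh | ⟨p, hp, hor⟩
        · rw [hh]; exact ⟨ha1, ha2⟩
        · rcases hor with hh | hh
          · rw [hh]; exact ht _ (mem_var_atoms_fst hp)
          · rw [hh]; exact ht _ (mem_var_atoms_snd hp)
      have hmC := hMsB _ hyC.1 hyC.2
      rw [hR1, S.hιfix _ hyC.1 hyC.2] at hdiff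
      have hsrc : (a, X) ∈ S.Δ₀ → (a, X) ∈ S.Δ₁ := fun hh => S.hΔ (a, X) hh haB
      by_cases hmB : permAtom Ms (permAtom ρ₁ a) ∈ S.Bs
      · refine hsrc (hd a ?_)
        rw [permAtom_append]
        intro hcontra
        rcases permAtom_eq_or_mem ρᵤ a with hh | ⟨p, hp, hor⟩
        · rw [hh] at hcontra; exact haB (hcontra ▸ hmB)
        · rcases hor with hh | hh
          · exact (hu _ (mem_var_atoms_fst hp)).1 ((hh ▸ hcontra) ▸ hmB)
          · exact (hu _ (mem_var_atoms_snd hp)).1 ((hh ▸ hcontra) ▸ hmB)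
      · rw [S.hσfix _ hmB hmC.1] at hdiff
        refine hsrc (hd a ?_)
        rw [permAtom_append]
        exact hdiff
  | h3 c s₀ ih =>
    intro u₂ Ms Mt h hR1 hu ht hMsA hMsB hV
    rw [permTerm_abs] at h
    have hcC : c ∉ S.C1 ∧ c ∉ S.C2 := ht c (by simp)
    have hmcC := hMsB c hcC.1 hcC.2
    have hMtc : permAtom Mt c = permAtom S.σ (permAtom Ms c) := by
      rw [hR1, S.hιfix c hcC.1 hcC.2]
    simp only [applySubst_abs, permTerm_abs]
    cases h with
    | abs_same h3 =>
      rename_i u₃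
      have hmB : permAtom Ms c ∉ S.Bs := (hu _ (by simp)).1
      have : permAtom Mt c = permAtom Ms c := by rw [hMtc, S.hσfix _ hmB hmcC.1]
      rw [this]
      refine Aeq.abs_same (ih Ms Mt h3 hR1 ?_ ?_ hMsA hMsB ?_)
      · intro z hz; exact hu z (by simp [hz])
      · intro z hz; exact ht z (by simp [hz])
      · intro z hz; exact hV (by simpa using hz)
    | abs_diff hne h3 h4 =>
      rename_i a' u₃
      have ha' : a' ∉ S.Bs ∧ a' ∉ S.C1 ∧ a' ∉ S.C2 := hu a' (by simp)
      have hσa' : permAtom S.σ a' = a' := S.hσfix a' ha'.1 ha'.2.1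
      have hbinder : a' ≠ permAtom Mt c := by
        rw [hMtc]
        by_cases hmcB : permAtom Ms c ∈ S.Bs
        · intro hh; exact ha'.2.1 (hh ▸ S.hσB _ hmcB)
        · rw [S.hσfix _ hmcB hmcC.1]; exact hne
      refine Aeq.abs_diff hbinder ?_ ?_
      · rw [permTerm_permTerm] at h3 ⊢
        refine ih ([(a', permAtom Ms c)] ++ Ms) ([(a', permAtom Mt c)] ++ Mt) h3 ?_ ?_ ?_ ?_ ?_ ?_
        · intro z
          rw [permAtom_append, permAtom_append, permAtom_single, permAtom_single,
            perm_swap_conj, hσa', hR1 z, hMtc]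
        · intro z hz; exact hu z (by simp [hz])
        · intro z hz; exact ht z (by simp [hz])
        · intro z hzC
          rw [permAtom_append, permAtom_single, hMsA z hzC]
          have hza : z ≠ a' := by
            rintro rfl
            rcases hzC with h | h
            · exact ha'.2.1 h
            · exact ha'.2.2 h
          have hzm : z ≠ permAtom Ms c := by
            rintro rfl
            rcases hzC with h | h
            · exact hmcC.1 h
            · exact hmcC.2 h
          unfold swapAtom
          simp [hza, hzm]
        · intro z hz1 hz2
          rw [permAtom_append, permAtom_single]
          have hm := hMsB z hz1 hz2
          unfold swapAtom
          dsimp only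
          split_ifs with h1 h2
          · exact ⟨hmcC.1, hmcC.2⟩
          · exact ⟨ha'.2.1, ha'.2.2⟩
          · exact hm
        · intro z hz; exact hV (by simpa using hz)
      · -- freshness of the abstracted atom
        rw [fresh_perm_iff]
        rw [fresh_perm_iff] at h4
        have hda : permAtom Ms (permAtom Ms.reverse a') = a' := permAtom_reverse_right Ms a'
        have hdC : permAtom Ms.reverse a' ∉ S.C1 ∧ permAtom Ms.reverse a' ∉ S.C2 := by
          constructor <;> intro hh
          · have h1 := hMsA _ (Or.inl hh)
            rw [hda] at h1
            rw [← h1] at hh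
            exact ha'.2.1 hh
          · have h1 := hMsA _ (Or.inr hh)
            rw [hda] at h1
            rw [← h1] at hh
            exact ha'.2.2 hh
        have hMtrev : permAtom Mt.reverse a' = permAtom Ms.reverse a' := by
          apply permAtom_injective Mt
          rw [permAtom_reverse_right]
          rw [hR1, S.hιfix _ hdC.1 hdC.2, hda, hσa']
        rw [hMtrev]
        exact S.fresh_omega s₀ h4 hdC.1 hdC.2 (fun z hz => ht z (by simp [hz]))
          (fun z hz => hV (by simpa using hz))
  | h4 f ts ih =>
    intro u₂ Ms Mt h hR1 hu ht hMsA hMsB hV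
    rw [permTerm_fn] at h
    cases h with | fn hf =>
    rename_i us
    simp only [applySubst_fn, permTerm_fn, List.map_map]
    refine Aeq.fn ?_
    have inner : ∀ (ts' : List (Term F)), (∀ t ∈ ts', t ∈ ts) → ∀ us',
        (∀ u' ∈ us', ∀ z ∈ u'.atoms, z ∉ S.Bs ∧ z ∉ S.C1 ∧ z ∉ S.C2) →
        List.Forall₂ (Aeq S.Δ₀) us' (ts'.map (permTerm Ms)) →
        List.Forall₂ (Aeq S.Δ₁) us'
          (ts'.map (fun t => permTerm Mt (applySubst (S.ω : Subst F) t))) := by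
      intro ts' hsub
      induction ts' with
      | nil =>
        intro us' _ h2
        rw [List.map_nil] at h2
        cases h2
        exact .nil
      | cons t ts'' ihl =>
        intro us' hus h2
        rw [List.map_cons] at h2
        cases h2 with | cons h2h h2t =>
        rename_i u' us''
        refine .cons ?_ (ihl (fun x hx => hsub x (by simp [hx])) us''
          (fun x hx => hus x (by simp [hx])) h2t)
        refine ih t (hsub t (by simp)) Ms Mt h2h hR1 (hus u' (by simp)) ?_ hMsA hMsB ?_
        · intro z hz; exact ht z (atoms_subset_fn (hsub t (by simp)) hz)
        · exact (vars_subset_fn (hsub t (by simp))).trans hV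
    exact inner ts (fun _ h => h) us (fun u' hu' z hz => hu z (atoms_subset_fn hu' hz)) hf

end OS

/-! ### Construction of fresh swap systems -/

section MkSwaps

theorem natA (m : ℕ) : m = m + 2 * 0 := by omega
theorem natB (m : ℕ) : m + 1 = m + 2 * 0 + 1 := by omega
theorem natC (m k y : ℕ) (h : y = m + 2 + 2 * k) : y = m + 2 * (k + 1) := by omega
theorem natD (m k y : ℕ) (h : y = m + 2 + 2 * k + 1) : y = m + 2 * (k + 1) + 1 := by omega
theorem natE (m k k' : ℕ) : m + 2 * k ≠ m + 2 * k' + 1 := by omega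
theorem natNE (a b : ℕ) (h : a < b) : a ≠ b := by omega
theorem natGE (m k : ℕ) : m ≤ m + 2 * k := by omega
theorem natGE1 (m k : ℕ) : m ≤ m + 2 * k + 1 := by omega
theorem natW (b m k : ℕ) (h : b < m) : b ≠ m + 2 + 2 * k := by omega
theorem natW1 (b m k : ℕ) (h : b < m) : b ≠ m + 2 + 2 * k + 1 := by omega
theorem natX (m k : ℕ) : m ≠ m + 2 + 2 * k := by omega
theorem natX1 (m k : ℕ) : m ≠ m + 2 + 2 * k + 1 := by omega
theorem natY (m k : ℕ) : m + 1 ≠ m + 2 + 2 * k := by omega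
theorem natY1 (m k : ℕ) : m + 1 ≠ m + 2 + 2 * k + 1 := by omega
theorem natZ (m : ℕ) : m ≠ m + 1 := by omega
theorem natLT (a m : ℕ) (h : a < m) : a < m + 2 := by omega
theorem natLTle (a m k : ℕ) (h : a < m) (h2 : m ≤ k) : a < k := by omega

def mkS : List Atom → ℕ → Perm
  | [], _ => []
  | b :: bs, m => (b, m) :: mkS bs (m + 2)

def mkN : List Atom → ℕ → Perm
  | [], _ => []
  | b :: bs, m => (b, m + 1) :: mkN bs (m + 2)

def mkI : List Atom → ℕ → Perm
  | [], _ => []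
  | _ :: bs, m => (m, m + 1) :: mkI bs (m + 2)

theorem mkS_mem : ∀ {bs : List Atom} {m : ℕ} {p : Atom × Atom},
    p ∈ mkS bs m → p.1 ∈ bs ∧ ∃ k, p.2 = m + 2 * k := by
  intro bs
  induction bs with
  | nil => intro m p h; simp [mkS] at h
  | cons b bs ih =>
    intro m p h
    rw [mkS] at h
    rcases List.mem_cons.1 h with h | h
    · subst h; exact ⟨by simp, 0, natA m⟩
    · obtain ⟨h1, k, hk⟩ := ih h
      exact ⟨by simp [h1], k + 1, natC m k _ hk⟩

theorem mkN_mem : ∀ {bs : List Atom} {m : ℕ} {p : Atom × Atom},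
    p ∈ mkN bs m → p.1 ∈ bs ∧ ∃ k, p.2 = m + 2 * k + 1 := by
  intro bs
  induction bs with
  | nil => intro m p h; simp [mkN] at h
  | cons b bs ih =>
    intro m p h
    rw [mkN] at h
    rcases List.mem_cons.1 h with h | h
    · subst h; exact ⟨by simp, 0, natB m⟩
    · obtain ⟨h1, k, hk⟩ := ih h
      exact ⟨by simp [h1], k + 1, natD m k _ hk⟩

theorem mkI_mem : ∀ {bs : List Atom} {m : ℕ} {p : Atom × Atom},
    p ∈ mkI bs m → ∃ k, p.1 = m + 2 * k ∧ p.2 = m + 2 * k + 1 := by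
  intro bs
  induction bs with
  | nil => intro m p h; simp [mkI] at h
  | cons b bs ih =>
    intro m p h
    rw [mkI] at h
    rcases List.mem_cons.1 h with h | h
    · subst h; exact ⟨0, natA m, natB m⟩
    · obtain ⟨k, hk1, hk2⟩ := ih h
      exact ⟨k + 1, natC m k _ hk1, natD m k _ hk2⟩

theorem mkS_exists : ∀ {bs : List Atom} {m : ℕ} {x : Atom}, x ∈ bs →
    ∃ y, (x, y) ∈ mkS bs m ∧ (x, y + 1) ∈ mkN bs m ∧ (y, y + 1) ∈ mkI bs m := by
  intro bs
  induction bs with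
  | nil => intro m x h; simp at h
  | cons b bs ih =>
    intro m x h
    rcases List.mem_cons.1 h with rfl | h
    · exact ⟨m, by rw [mkS]; simp, by rw [mkN]; simp, by rw [mkI]; simp⟩
    · obtain ⟨y, h1, h2, h3⟩ := ih (m := m + 2) h
      exact ⟨y, by rw [mkS]; simp [h1], by rw [mkN]; simp [h2], by rw [mkI]; simp [h3]⟩

theorem mkSN_pair : ∀ {bs : List Atom} {m : ℕ} {x y : Atom}, (x, y) ∈ mkS bs m →
    (x, y + 1) ∈ mkN bs m ∧ (y, y + 1) ∈ mkI bs m := by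
  intro bs
  induction bs with
  | nil => intro m x y h; simp [mkS] at h
  | cons b bs ih =>
    intro m x y h
    rw [mkS] at h
    rcases List.mem_cons.1 h with h | h
    · rw [Prod.mk.injEq] at h
      obtain ⟨rfl, rfl⟩ := h
      exact ⟨by rw [mkN]; simp, by rw [mkI]; simp⟩
    · obtain ⟨h1, h2⟩ := ih h
      exact ⟨by rw [mkN]; simp [h1], by rw [mkI]; simp [h2]⟩

theorem mkI_fst_snd : ∀ {bs : List Atom} {m : ℕ} {pq : Atom × Atom}, pq ∈ mkI bs m →
    (∃ q ∈ mkS bs m, Prod.snd q = pq.1) ∧ (∃ r ∈ mkN bs m, Prod.snd r = pq.2) := by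
  intro bs
  induction bs with
  | nil => intro m pq h; simp [mkI] at h
  | cons b bs ih =>
    intro m pq h
    rw [mkI] at h
    rcases List.mem_cons.1 h with h | h
    · subst h
      exact ⟨⟨(b, m), by rw [mkS]; simp, rfl⟩, ⟨(b, m + 1), by rw [mkN]; simp, rfl⟩⟩
    · obtain ⟨⟨q, hq, hq2⟩, ⟨r, hr, hr2⟩⟩ := ih h
      exact ⟨⟨q, by rw [mkS]; simp [hq], hq2⟩, ⟨r, by rw [mkN]; simp [hr], hr2⟩⟩

theorem mkS_ok : ∀ {bs : List Atom} {m : ℕ}, bs.Nodup → (∀ b ∈ bs, b < m) →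
    SwapsOK (mkS bs m) := by
  intro bs
  induction bs with
  | nil => intro m _ _; rw [mkS]; trivial
  | cons b bs ih =>
    intro m hnd hlt
    rw [mkS]
    refine ⟨natNE b m (hlt b (by simp)), ?_, ih (List.nodup_cons.1 hnd).2
      (fun b' hb' => natLT _ _ (hlt b' (by simp [hb'])))⟩
    intro p hp
    obtain ⟨hp1, k, hk⟩ := mkS_mem hp
    refine ⟨fun hc => (List.nodup_cons.1 hnd).1 (hc ▸ hp1), ?_, ?_, ?_⟩
    · rw [hk]; exact natW b m k (hlt b (by simp))
    · exact Ne.symm (natNE p.1 m (hlt p.1 (by simp [hp1])))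
    · rw [hk]; exact natX m k

theorem mkN_ok : ∀ {bs : List Atom} {m : ℕ}, bs.Nodup → (∀ b ∈ bs, b < m) →
    SwapsOK (mkN bs m) := by
  intro bs
  induction bs with
  | nil => intro m _ _; rw [mkN]; trivial
  | cons b bs ih =>
    intro m hnd hlt
    rw [mkN]
    refine ⟨natNE b (m + 1) (natLTle b m (m + 1) (hlt b (by simp)) (by omega)), ?_,
      ih (List.nodup_cons.1 hnd).2 (fun b' hb' => natLT _ _ (hlt b' (by simp [hb'])))⟩
    intro p hp
    obtain ⟨hp1, k, hk⟩ := mkN_mem hp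
    refine ⟨fun hc => (List.nodup_cons.1 hnd).1 (hc ▸ hp1), ?_, ?_, ?_⟩
    · rw [hk]; exact natW1 b m k (hlt b (by simp))
    · exact Ne.symm (natNE p.1 (m + 1) (natLTle p.1 m (m + 1) (hlt p.1 (by simp [hp1]))
        (by omega)))
    · rw [hk]; exact natY1 m k

theorem mkI_ok : ∀ {bs : List Atom} {m : ℕ}, SwapsOK (mkI bs m) := by
  intro bs
  induction bs with
  | nil => intro m; rw [mkI]; trivial
  | cons b bs ih =>
    intro m
    rw [mkI]
    refine ⟨natZ m, ?_, ih⟩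
    intro p hp
    obtain ⟨k, hk1, hk2⟩ := mkI_mem hp
    exact ⟨by rw [hk1]; exact natX m k, by rw [hk2]; exact natX1 m k,
      by rw [hk1]; exact natY m k, by rw [hk2]; exact natY1 m k⟩

end MkSwaps
/-! ### Congruence of one-step equality -/

section Congr
variable {F : Type}

theorem build_OS (Δ Γ : Ctx) (Av : Finset Atom) (Vv : Finset Var)
    (hΓAv : ctxAtoms Γ ⊆ Av) :
    ∃ S : OS, S.Bs = ctxAtoms Γ ∧ S.Δ₀ = Δ ∪ Γ ∧ S.V = Vv ∧
      S.Δ₁ = Δ ∪ ((S.C1 ∪ S.C2) ×ˢ Vv) ∧ (∀ a, a ∈ S.C1 ∪ S.C2 → a ∉ Av) := by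
  classical
  set M : ℕ := Av.sup id + 1 with hM
  have hAvM : ∀ a ∈ Av, a < M := fun a ha =>
    Nat.lt_succ_of_le (Finset.le_sup (f := id) ha)
  set Bl : List Atom := (ctxAtoms Γ).toList with hBl
  have hBlnd : Bl.Nodup := Finset.nodup_toList _
  have hBlM : ∀ b ∈ Bl, b < M := fun b hb =>
    hAvM b (hΓAv (by rwa [hBl, Finset.mem_toList] at hb))
  have hokS : SwapsOK (mkS Bl M) := mkS_ok hBlnd hBlM
  have hokN : SwapsOK (mkN Bl M) := mkN_ok hBlnd hBlM
  have hokI : SwapsOK (mkI Bl M) := mkI_ok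
  set C1 : Finset Atom := ((mkS Bl M).map Prod.snd).toFinset with hC1def
  set C2 : Finset Atom := ((mkN Bl M).map Prod.snd).toFinset with hC2def
  have hC1M : ∀ a ∈ C1, ∃ k, a = M + 2 * k := by
    intro a ha
    rw [hC1def, List.mem_toFinset] at ha
    obtain ⟨pr, hpr, rfl⟩ := List.mem_map.1 ha
    exact (mkS_mem hpr).2
  have hC2M : ∀ a ∈ C2, ∃ k, a = M + 2 * k + 1 := by
    intro a ha
    rw [hC2def, List.mem_toFinset] at ha
    obtain ⟨pr, hpr, rfl⟩ := List.mem_map.1 ha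
    exact (mkN_mem hpr).2
  have hC1Av : ∀ a ∈ C1, a ∉ Av := by
    intro a ha hin
    obtain ⟨k, rfl⟩ := hC1M a ha
    exact absurd (hAvM _ hin) (Nat.not_lt.2 (natGE M k))
  have hC2Av : ∀ a ∈ C2, a ∉ Av := by
    intro a ha hin
    obtain ⟨k, rfl⟩ := hC2M a ha
    exact absurd (hAvM _ hin) (Nat.not_lt.2 (natGE1 M k))
  have hC1C2 : ∀ a ∈ C1, a ∉ C2 := by
    intro a h1 h2
    obtain ⟨k, hk⟩ := hC1M a h1
    obtain ⟨k', hk'⟩ := hC2M a h2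
    exact natE M k k' (hk.symm.trans hk')
  have hC1Bs : ∀ a ∈ C1, a ∉ ctxAtoms Γ := fun a ha hin => hC1Av a ha (hΓAv hin)
  refine ⟨{ σ := mkS Bl M
            ν := mkN Bl M
            ι := mkI Bl M
            Bs := ctxAtoms Γ
            C1 := C1
            C2 := C2
            V := Vv
            Δ₀ := Δ ∪ Γ
            Δ₁ := Δ ∪ ((C1 ∪ C2) ×ˢ Vv)
            hσB := by
              intro a ha
              obtain ⟨yv, h1, _, _⟩ := mkS_exists (bs := Bl) (x := a) (m := M)
                (by rwa [hBl, Finset.mem_toList])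
              rw [(swapsOK_val hokS _ h1).1]
              rw [hC1def, List.mem_toFinset]
              exact List.mem_map_of_mem (f := Prod.snd) h1
            hσσ := swapsOK_invol hokS
            hσfix := by
              intro a haB haC1
              refine permAtom_fix (fun pr hpr => ⟨?_, ?_⟩)
              · intro hc
                have h1 := (mkS_mem hpr).1
                rw [hBl, Finset.mem_toList] at h1
                exact haB (by rw [hc]; exact h1)
              · intro hc
                refine haC1 ?_
                rw [hC1def, List.mem_toFinset, hc]
                exact List.mem_map_of_mem (f := Prod.snd) hpr
            hνB := by
              intro a ha
              obtain ⟨yv, _, h2, _⟩ := mkS_exists (bs := Bl) (x := a) (m := M)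
                (by rwa [hBl, Finset.mem_toList])
              rw [(swapsOK_val hokN _ h2).1]
              rw [hC2def, List.mem_toFinset]
              exact List.mem_map_of_mem (f := Prod.snd) h2
            hνν := swapsOK_invol hokN
            hνfix := by
              intro a haB haC2
              refine permAtom_fix (fun pr hpr => ⟨?_, ?_⟩)
              · intro hc
                have h1 := (mkN_mem hpr).1
                rw [hBl, Finset.mem_toList] at h1
                exact haB (by rw [hc]; exact h1)
              · intro hc
                refine haC2 ?_
                rw [hC2def, List.mem_toFinset, hc]
                exact List.mem_map_of_mem (f := Prod.snd) hpr
            hιν := by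
              intro a ha
              obtain ⟨yv, h1, h2, h3⟩ := mkS_exists (bs := Bl) (x := a) (m := M)
                (by rwa [hBl, Finset.mem_toList])
              rw [(swapsOK_val hokN _ h2).1, (swapsOK_val hokI _ h3).2,
                (swapsOK_val hokS _ h1).1]
            hιι := swapsOK_invol hokI
            hιfix := by
              intro a h1 h2
              refine permAtom_fix (fun pr hpr => ⟨?_, ?_⟩)
              · intro hc
                obtain ⟨⟨qS, hqS, hqS2⟩, _⟩ := mkI_fst_snd hpr
                refine h1 ?_
                rw [hC1def, List.mem_toFinset, hc, ← hqS2]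
                exact List.mem_map_of_mem (f := Prod.snd) hqS
              · intro hc
                obtain ⟨_, ⟨rN, hrN, hrN2⟩⟩ := mkI_fst_snd hpr
                refine h2 ?_
                rw [hC2def, List.mem_toFinset, hc, ← hrN2]
                exact List.mem_map_of_mem (f := Prod.snd) hrN
            hC1 := fun a ha => ⟨hC1Bs a ha, hC1C2 a ha⟩
            hΔ := by
              intro c hc hcB
              rcases Finset.mem_union.1 hc with h | h
              · exact Finset.mem_union.2 (Or.inl h)
              · exact absurd (Finset.mem_image.2 ⟨c, h, rfl⟩) hcB
            hCV := by
              intro a X haC hXV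
              refine Finset.mem_union.2 (Or.inr ?_)
              rw [Finset.mem_product]
              exact ⟨Finset.mem_union.2 haC, hXV⟩ },
    rfl, rfl, rfl, rfl, ?_⟩
  intro a ha hin
  rcases Finset.mem_union.1 ha with h | h
  · exact hC1Av a h hin
  · exact hC2Av a h hin

set_option maxHeartbeats 2000000 in
theorem eqStep_congr {E : Set (Rule F)} (hEeqv : Equivariant E) {Δ : Ctx}
    {x y s s' : Term F} {p : List ℕ}
    (hstep : EqStep E Δ x y) (hsubp : subtermAt p s = some x)
    (hreplp : replaceAt p s y = some s') :
    EqStep E Δ s s' := by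
  obtain ⟨ax, haxE, q, θ, Γ, w, w', hΓ, hsat, hsubw, haw, hrepw, haw'⟩ := hstep
  classical
  obtain ⟨S, hBs, hΔ₀, hVS, hΔ₁, hCAv⟩ := build_OS Δ Γ
    (ctxAtoms Δ ∪ s.atoms ∪ s'.atoms ∪ x.atoms ∪ y.atoms ∪ w.atoms
      ∪ w'.atoms ∪ ctxAtoms Γ ∪ ruleAtoms ax
      ∪ (ctxVars ax.1).biUnion (fun X => (θ X).atoms))
    (x.vars ∪ y.vars ∪ w.vars ∪ w'.vars
      ∪ (ctxVars ax.1).biUnion (fun X => (θ X).vars))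
    (by intro a ha; simp only [Finset.mem_union]; tauto)
  set Av : Finset Atom := ctxAtoms Δ ∪ s.atoms ∪ s'.atoms ∪ x.atoms ∪ y.atoms ∪ w.atoms
      ∪ w'.atoms ∪ ctxAtoms Γ ∪ ruleAtoms ax
      ∪ (ctxVars ax.1).biUnion (fun X => (θ X).atoms) with hAv
  set Vv : Finset Var := x.vars ∪ y.vars ∪ w.vars ∪ w'.vars
      ∪ (ctxVars ax.1).biUnion (fun X => (θ X).vars) with hVv
  set Γout : Ctx := (S.C1 ∪ S.C2) ×ˢ Vv with hΓout
  have hACz : ∀ z, z ∈ Av → z ∉ S.C1 ∧ z ∉ S.C2 :=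
    fun z hz => ⟨fun h => hCAv z (Finset.mem_union.2 (Or.inl h)) hz,
      fun h => hCAv z (Finset.mem_union.2 (Or.inr h)) hz⟩
  have hAvx : x.atoms ⊆ Av := by
    rw [hAv]; intro z hz; simp only [Finset.mem_union]; tauto
  have hAvy : y.atoms ⊆ Av := by
    rw [hAv]; intro z hz; simp only [Finset.mem_union]; tauto
  have hAvw : w.atoms ⊆ Av := by
    rw [hAv]; intro z hz; simp only [Finset.mem_union]; tauto
  have hAvw' : w'.atoms ⊆ Av := by
    rw [hAv]; intro z hz; simp only [Finset.mem_union]; tauto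
  have hBsx : ∀ z ∈ x.atoms, z ∉ S.Bs := by
    rw [hBs]
    intro z hz hzB
    obtain ⟨c, hcΓ, rfl⟩ := Finset.mem_image.1 hzB
    refine hΓ c hcΓ ?_
    exact Finset.mem_union.2 (Or.inl (Finset.mem_union.2 (Or.inr hz)))
  have hBsy : ∀ z ∈ y.atoms, z ∉ S.Bs := by
    rw [hBs]
    intro z hz hzB
    obtain ⟨c, hcΓ, rfl⟩ := Finset.mem_image.1 hzB
    exact hΓ c hcΓ (Finset.mem_union.2 (Or.inr hz))
  have hVw : w.vars ⊆ S.V := by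
    rw [hVS, hVv]; intro v hv; simp only [Finset.mem_union]; tauto
  have hVw' : w'.vars ⊆ S.V := by
    rw [hVS, hVv]; intro v hv; simp only [Finset.mem_union]; tauto
  have hR1 : ∀ z, permAtom (S.σ ++ S.ι) z
      = permAtom S.σ (permAtom ([] : Perm) (permAtom S.ι z)) := by
    intro z
    rw [permAtom_append]
    rfl
  have hMsA : ∀ z, (z ∈ S.C1 ∨ z ∈ S.C2) → permAtom ([] : Perm) z = z := fun z _ => rfl
  have hMsB : ∀ z, z ∉ S.C1 → z ∉ S.C2 →
      permAtom ([] : Perm) z ∉ S.C1 ∧ permAtom ([] : Perm) z ∉ S.C2 :=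
    fun z h1 h2 => ⟨h1, h2⟩
  obtain ⟨W, hW⟩ := replaceAt_isSome hsubp (permTerm (S.σ ++ S.ι) (applySubst (S.ω : Subst F) w))
  obtain ⟨W', hW'⟩ := replaceAt_isSome hsubp (permTerm (S.σ ++ S.ι) (applySubst (S.ω : Subst F) w'))
  refine ⟨permRule (S.σ ++ S.ι) ax, hEeqv _ ax haxE, p ++ q,
    fun X => applySubst (S.ω : Subst F) (θ X), Γout, W, W', ?_, ?_, ?_, ?_, ?_, ?_⟩
  · -- freshness of Γout
    intro c hc
    rw [hΓout, Finset.mem_product] at hc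
    intro hmem
    refine hCAv c.1 hc.1 ?_
    rw [hAv]
    simp only [Finset.mem_union] at hmem ⊢
    tauto
  · -- SatCtx
    intro pr hpr
    obtain ⟨⟨a, X⟩, hmem, rfl⟩ := Finset.mem_image.1 hpr
    dsimp only
    have haAv : a ∈ Av := by
      rw [hAv]
      simp only [Finset.mem_union]
      have h1 : a ∈ ctxAtoms ax.1 := Finset.mem_image.2 ⟨(a, X), hmem, rfl⟩
      have h2 : a ∈ ruleAtoms ax := by
        unfold ruleAtoms
        simp only [Finset.mem_union]
        tauto
      tauto
    have haC := hACz a haAv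
    have hXv : X ∈ ctxVars ax.1 := Finset.mem_image.2 ⟨(a, X), hmem, rfl⟩
    have hθat : ∀ z ∈ (θ X).atoms, z ∉ S.C1 ∧ z ∉ S.C2 := by
      intro z hz
      refine hACz z ?_
      rw [hAv]
      simp only [Finset.mem_union]
      have : z ∈ (ctxVars ax.1).biUnion (fun X => (θ X).atoms) :=
        Finset.mem_biUnion.2 ⟨X, hXv, hz⟩
      tauto
    have hθv : (θ X).vars ⊆ S.V := by
      rw [hVS, hVv]
      intro v hv
      simp only [Finset.mem_union]
      exact Or.inr (Finset.mem_biUnion.2 ⟨X, hXv, hv⟩)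
    have hι_a : permAtom S.ι a = a := S.hιfix a haC.1 haC.2
    have hσι_a : permAtom (S.σ ++ S.ι) a = permAtom S.σ a := by
      rw [permAtom_append, hι_a]
    have hΔ₁' : Fresh S.Δ₁ (permAtom (S.σ ++ S.ι) a) (applySubst (S.ω : Subst F) (θ X)) →
        Fresh (Δ ∪ Γout) (permAtom (S.σ ++ S.ι) a) (applySubst (S.ω : Subst F) (θ X)) := by
      rw [hΔ₁, hΓout]
      exact id
    refine hΔ₁' ?_
    by_cases haB : a ∈ S.Bs
    · rw [hσι_a]
      exact S.fresh_super (θ X) (S.hσB a haB) hθat hθv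
    · rw [hσι_a, S.hσfix a haB haC.1]
      refine S.fresh_omega (θ X) ?_ haC.1 haC.2 hθat hθv
      rw [hΔ₀]
      exact hsat (a, X) hmem
  · -- subterm equation
    rw [subtermAt_append, subtermAt_replaceAt hW]
    simp only [Option.bind_some]
    have h1 : subtermAt q (applySubst (S.ω : Subst F) w)
        = some (applySubst (S.ω : Subst F) (applySubst θ ax.2.1)) :=
      subtermAt_applySubst _ hsubw
    have h2 := subtermAt_permTerm (S.σ ++ S.ι) h1
    rw [h2]
    congr 1
    show permTerm (S.σ ++ S.ι) (applySubst (S.ω : Subst F) (applySubst θ ax.2.1))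
      = applySubst (fun X => applySubst (S.ω : Subst F) (θ X)) (permTerm (S.σ ++ S.ι) ax.2.1)
    rw [applySubst_permTerm]
    congr 1
    rw [applySubst_applySubst]
  · -- Aeq s W
    have hx : Aeq S.Δ₀ x (permTerm [] w) := by rw [permTerm_nil, hΔ₀]; exact haw
    have hxw₂ : Aeq S.Δ₁ x (permTerm (S.σ ++ S.ι) (applySubst (S.ω : Subst F) w)) :=
      S.omega w [] (S.σ ++ S.ι) hx hR1
        (fun z hz => ⟨hBsx z hz, (hACz z (hAvx hz)).1, (hACz z (hAvx hz)).2⟩)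
        (fun z hz => hACz z (hAvw hz)) hMsA hMsB hVw
    rw [hΔ₁, hΓout] at hxw₂
    exact aeq_replace₂ hxw₂ (replaceAt_self hsubp) hW
  · -- replace equation
    have h1 : replaceAt q (applySubst (S.ω : Subst F) w)
        (applySubst (S.ω : Subst F) (applySubst θ ax.2.2))
        = some (applySubst (S.ω : Subst F) w') := replaceAt_applySubst _ hrepw
    have h2 := replaceAt_permTerm (S.σ ++ S.ι) h1
    have heq : permTerm (S.σ ++ S.ι) (applySubst (S.ω : Subst F) (applySubst θ ax.2.2))
        = applySubst (fun X => applySubst (S.ω : Subst F) (θ X))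
            (permTerm (S.σ ++ S.ι) ax.2.2) := by
      rw [applySubst_permTerm]
      congr 1
      rw [applySubst_applySubst]
    rw [heq] at h2
    exact replaceAt_append (subtermAt_replaceAt hW) h2
      (by rw [replace_replace hW]; exact hW')
  · -- Aeq W' s'
    have hy : Aeq S.Δ₀ y (permTerm [] w') := by
      rw [permTerm_nil, hΔ₀]; exact aeq_symm haw'
    have hyw₂' : Aeq S.Δ₁ y (permTerm (S.σ ++ S.ι) (applySubst (S.ω : Subst F) w')) :=
      S.omega w' [] (S.σ ++ S.ι) hy hR1
        (fun z hz => ⟨hBsy z hz, (hACz z (hAvy hz)).1, (hACz z (hAvy hz)).2⟩)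
        (fun z hz => hACz z (hAvw' hz)) hMsA hMsB hVw'
    rw [hΔ₁, hΓout] at hyw₂'
    exact aeq_replace₂ (aeq_symm hyw₂') hW' hreplp

end Congr
/-! ### Rewriting modulo: basic inclusions and termination -/

section AbstractLayer
variable {F : Type} {R E : Set (Rule F)}

theorem eqE_congr (hEeqv : Equivariant E) {Δ : Ctx}
    {a b : Term F} (h : EqE E Δ a b) :
    ∀ {s s' : Term F} {p : List ℕ}, subtermAt p s = some a → replaceAt p s b = some s' →
    EqE E Δ s s' := by
  induction h using Relation.ReflTransGen.head_induction_on with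
  | refl =>
    intro s s' p hsub hrep
    have h1 := replaceAt_self hsub
    rw [h1] at hrep
    cases hrep
    exact eqE_refl _
  | head hstep htail ih =>
    rename_i a' c
    intro s s' p hsub hrep
    obtain ⟨sc, hsc⟩ := replaceAt_isSome hsub c
    have hstep' : EqStep E Δ s sc ∨ Aeq Δ s sc := by
      rcases hstep with h1 | h1
      · exact Or.inl (eqStep_congr hEeqv h1 hsub hsc)
      · exact Or.inr (aeq_replace₂ h1 (replaceAt_self hsub) hsc)
    have htail' : EqE E Δ sc s' :=
      ih (subtermAt_replaceAt hsc) (by rw [replace_replace hsc]; exact hrep)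
    exact Relation.ReflTransGen.head hstep' htail'

theorem rewR_rewRE {Δ : Ctx} {s t : Term F} (h : RewR R Δ s t) : RewRE R E Δ s t := by
  obtain ⟨r, hr, p, s₁, u, θ, h1, h2, h3, h4, h5⟩ := h
  exact ⟨r, hr, p, s₁, u, θ, h1, h2, aeq_eqE h3, h4, h5⟩

theorem rewRE_rewRmodE (hEeqv : Equivariant E) {Δ : Ctx} {s t : Term F}
    (h : RewRE R E Δ s t) : RewRmodE R E Δ s t := by
  obtain ⟨r, hr, p, s₁, u, θ, h1, h2, h3, h4, h5⟩ := h
  obtain ⟨sh1, hsh1⟩ := replaceAt_isSome h1 (applySubst θ r.2.1)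
  refine ⟨sh1, t, eqE_congr hEeqv h3 h1 hsh1,
    ⟨r, hr, p, applySubst θ r.2.1, u, θ, subtermAt_replaceAt hsh1, h2, aeq_refl _ _, ?_, h5⟩,
    eqE_refl t⟩
  rw [replace_replace hsh1]
  exact h4

theorem wf_rmodE (hterm : ETerminating R E) (Δ : Ctx) :
    WellFounded (fun a b : Term F => RewRmodE R E Δ b a) := by
  classical
  by_contra hwf
  have hex : ∃ x : Term F, ¬ Acc (fun a b : Term F => RewRmodE R E Δ b a) x := by
    by_contra hx
    push_neg at hx
    exact hwf ⟨hx⟩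
  obtain ⟨x0, hx0⟩ := hex
  have step : ∀ x : Term F, ¬ Acc (fun a b : Term F => RewRmodE R E Δ b a) x →
      ∃ y, RewRmodE R E Δ x y ∧ ¬ Acc (fun a b : Term F => RewRmodE R E Δ b a) y := by
    intro x hx
    by_contra hy
    push_neg at hy
    exact hx (Acc.intro x (fun y hyx => hy y hyx))
  choose f hf1 hf2 using step
  set g : ℕ → {x : Term F // ¬ Acc (fun a b : Term F => RewRmodE R E Δ b a) x} :=
    fun n => Nat.rec ⟨x0, hx0⟩ (fun _ p => ⟨f p.1 p.2, hf2 p.1 p.2⟩) n with hg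
  exact hterm Δ ⟨fun n => (g n).1, fun n => hf1 (g n).1 (g n).2⟩

theorem wf_rE (hEeqv : Equivariant E) (hterm : ETerminating R E) (Δ : Ctx) :
    WellFounded (fun a b : Term F => RewRE R E Δ b a) :=
  Subrelation.wf (fun {_ _} h => rewRE_rewRmodE hEeqv h) (wf_rmodE hterm Δ)

theorem exists_nf_rE (hEeqv : Equivariant E) (hterm : ETerminating R E) (Δ : Ctx)
    (t : Term F) :
    ∃ v, Relation.ReflTransGen (RewRE R E Δ) t v ∧ NFRE R E Δ v := by
  classical
  refine (wf_rE hEeqv hterm Δ).induction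
    (C := fun t => ∃ v, Relation.ReflTransGen (RewRE R E Δ) t v ∧ NFRE R E Δ v) t ?_
  intro x ih
  by_cases hx : ∃ u, RewRE R E Δ x u
  · obtain ⟨u, hu⟩ := hx
    obtain ⟨v, hv1, hv2⟩ := ih u hu
    exact ⟨v, .head hu hv1, hv2⟩
  · exact ⟨x, .refl, hx⟩

theorem exists_nf_rmodE (hterm : ETerminating R E) (Δ : Ctx) (t : Term F) :
    ∃ v, Relation.ReflTransGen (RewRmodE R E Δ) t v ∧ NFRmodE R E Δ v := by
  classical
  refine (wf_rmodE hterm Δ).induction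
    (C := fun t => ∃ v, Relation.ReflTransGen (RewRmodE R E Δ) t v ∧ NFRmodE R E Δ v) t ?_
  intro x ih
  by_cases hx : ∃ u, RewRmodE R E Δ x u
  · obtain ⟨u, hu⟩ := hx
    obtain ⟨v, hv1, hv2⟩ := ih u hu
    exact ⟨v, .head hu hv1, hv2⟩
  · exact ⟨x, .refl, hx⟩

theorem rtg_nf_eq {α : Type} {r : α → α → Prop} {u v : α}
    (h : Relation.ReflTransGen r u v) (hnf : ¬ ∃ c, r u c) : v = u := by
  rcases h.cases_head with h1 | ⟨c, hc, _⟩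
  · exact h1.symm
  · exact absurd ⟨c, hc⟩ hnf

theorem transGen_rev {α : Type} {Q : α → α → Prop} {a b : α}
    (h : Relation.TransGen Q a b) : Relation.TransGen (fun x y => Q y x) b a := by
  induction h with
  | single h1 => exact .single h1
  | tail _ h2 ih => exact .head h2 ih

theorem rtg_RE_to_B (hEeqv : Equivariant E) {Δ : Ctx} {a b : Term F}
    (h : Relation.ReflTransGen (RewRE R E Δ) a b) :
    Relation.ReflTransGen (RewRmodE R E Δ) a b := by
  induction h with
  | refl => exact .refl
  | tail _ h2 ih => exact ih.tail (rewRE_rewRmodE hEeqv h2)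

/-- Coherence implies that `≈E`-equal terms have `≈E`-equal `R,E`-normal forms. -/
theorem coh_nf_pres (hEeqv : Equivariant E) (hEsymm : SymmClosed E)
    (hterm : ETerminating R E) (hconf : EConfluentRE R E) (hcoh : ECoherent R E)
    (Δ : Ctx) :
    ∀ x : Term F, ∀ {y nx ny : Term F}, EqE E Δ x y →
      Relation.ReflTransGen (RewRE R E Δ) x nx → NFRE R E Δ nx →
      Relation.ReflTransGen (RewRE R E Δ) y ny → NFRE R E Δ ny → EqE E Δ nx ny := by
  intro x
  refine ((wf_rmodE hterm Δ).transGen).induction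
    (C := fun x => ∀ {y nx ny : Term F}, EqE E Δ x y →
      Relation.ReflTransGen (RewRE R E Δ) x nx → NFRE R E Δ nx →
      Relation.ReflTransGen (RewRE R E Δ) y ny → NFRE R E Δ ny → EqE E Δ nx ny) x ?_
  intro x ih y nx ny hxy hxnx hnx hyny hny
  by_cases hxred : ∃ x₁, RewRE R E Δ x x₁
  · obtain ⟨x₁, hx₁⟩ := hxred
    obtain ⟨t₄, t₅, t₆, h34, h25, h56, h46⟩ := hcoh Δ x y x₁ hxy hx₁
    obtain ⟨n₄, hn₄1, hn₄2⟩ := exists_nf_rE hEeqv hterm Δ t₄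
    obtain ⟨n₆, hn₆1, hn₆2⟩ := exists_nf_rE hEeqv hterm Δ t₆
    obtain ⟨a1, b1, ha1, hb1, hab1⟩ := hconf Δ x nx n₄ hxnx (.head hx₁ (h34.trans hn₄1))
    have e1 : EqE E Δ nx n₄ := by
      rw [← rtg_nf_eq ha1 hnx, ← rtg_nf_eq hb1 hn₄2]
      exact hab1
    obtain ⟨a2, b2, ha2, hb2, hab2⟩ := hconf Δ y ny n₆ hyny (.head h25 (h56.trans hn₆1))
    have e2 : EqE E Δ ny n₆ := by
      rw [← rtg_nf_eq ha2 hny, ← rtg_nf_eq hb2 hn₆2]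
      exact hab2
    have hbelow : Relation.TransGen (fun a b : Term F => RewRmodE R E Δ b a) t₄ x := by
      refine transGen_rev ?_
      exact Relation.TransGen.head' (rewRE_rewRmodE hEeqv hx₁)
        (rtg_RE_to_B hEeqv (h34.trans (Relation.ReflTransGen.refl)))
    have e3 : EqE E Δ n₄ n₆ := ih t₄ hbelow h46 hn₄1 hn₄2 hn₆1 hn₆2
    exact eqE_trans e1 (eqE_trans e3 (eqE_symm hEsymm e2))
  · -- x is an R,E-normal form
    have hx_eq : nx = x := rtg_nf_eq hxnx hxred
    have hynf : NFRE R E Δ y := by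
      rintro ⟨y₁, hy₁⟩
      obtain ⟨_, t₅, _, _, h25, _, _⟩ := hcoh Δ y x y₁ (eqE_symm hEsymm hxy) hy₁
      exact hxred ⟨t₅, h25⟩
    have hy_eq : ny = y := rtg_nf_eq hyny hynf
    rw [hx_eq, hy_eq]
    exact hxy

/-- Coherence implies agreement of `R,E`- and `R/E`-normal forms. -/
theorem coh_main (hEeqv : Equivariant E) (hEsymm : SymmClosed E)
    (hterm : ETerminating R E) (hconf : EConfluentRE R E) (hcoh : ECoherent R E)
    (Δ : Ctx) :
    ∀ x : Term F, ∀ {v nx : Term F},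
      Relation.ReflTransGen (RewRmodE R E Δ) x v → NFRmodE R E Δ v →
      Relation.ReflTransGen (RewRE R E Δ) x nx → NFRE R E Δ nx → EqE E Δ nx v := by
  intro x
  refine ((wf_rmodE hterm Δ).transGen).induction
    (C := fun x => ∀ {v nx : Term F},
      Relation.ReflTransGen (RewRmodE R E Δ) x v → NFRmodE R E Δ v →
      Relation.ReflTransGen (RewRE R E Δ) x nx → NFRE R E Δ nx → EqE E Δ nx v) x ?_
  intro x ih v nx hxv hv hxnx hnx
  rcases hxv.cases_head with h1 | ⟨x₂, hx₂, htail⟩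
  · -- v = x and x is R/E-normal, hence R,E-normal
    subst h1
    have hxnf : NFRE R E Δ x := by
      rintro ⟨u, hu⟩
      exact hv ⟨u, rewRE_rewRmodE hEeqv hu⟩
    rw [rtg_nf_eq hxnx hxnf]
    exact eqE_refl x
  · obtain ⟨m, m', h1, h2, h3⟩ := hx₂
    have hmRE : RewRE R E Δ m m' := rewR_rewRE h2
    obtain ⟨t₄, t₅, t₆, h34, h25, h56, h46⟩ := hcoh Δ m x m' (eqE_symm hEsymm h1) hmRE
    obtain ⟨n₄, hn₄1, hn₄2⟩ := exists_nf_rE hEeqv hterm Δ t₄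
    obtain ⟨n₆, hn₆1, hn₆2⟩ := exists_nf_rE hEeqv hterm Δ t₆
    obtain ⟨a1, b1, ha1, hb1, hab1⟩ := hconf Δ x nx n₆ hxnx (.head h25 (h56.trans hn₆1))
    have e1 : EqE E Δ nx n₆ := by
      rw [← rtg_nf_eq ha1 hnx, ← rtg_nf_eq hb1 hn₆2]
      exact hab1
    have e2 : EqE E Δ n₄ n₆ :=
      coh_nf_pres hEeqv hEsymm hterm hconf hcoh Δ t₄ h46 hn₄1 hn₄2 hn₆1 hn₆2
    obtain ⟨n₂, hn₂1, hn₂2⟩ := exists_nf_rE hEeqv hterm Δ x₂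
    have hbelow : Relation.TransGen (fun a b : Term F => RewRmodE R E Δ b a) x₂ x :=
      transGen_rev (Relation.TransGen.single ⟨m, m', h1, h2, h3⟩)
    have e3 : EqE E Δ n₂ v := ih x₂ hbelow htail hv hn₂1 hn₂2
    have e4 : EqE E Δ n₂ n₄ :=
      coh_nf_pres hEeqv hEsymm hterm hconf hcoh Δ x₂ (eqE_symm hEsymm h3) hn₂1 hn₂2
        (h34.trans hn₄1) hn₄2
    exact eqE_trans e1 (eqE_trans (eqE_symm hEsymm e2)
      (eqE_trans (eqE_symm hEsymm e4) e3))

end AbstractLayer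

/-- **Nominal E-coherence theorem**: if `R` is E-terminating and `R,E` is E-confluent,
then for every term-in-context the `R,E`- and `R/E`-normal forms are E-equal
iff `→R,E` is E-coherent. -/
theorem nominal_E_coherence (R E : Set (Rule F))
    (hReqv : Equivariant R) (hEeqv : Equivariant E) (hEsymm : SymmClosed E)
    (hterm : ETerminating R E) (hconf : EConfluentRE R E) :
    ((∀ (Δ : Ctx) (t u v : Term F),
        Relation.ReflTransGen (RewRE R E Δ) t u → NFRE R E Δ u →
        Relation.ReflTransGen (RewRmodE R E Δ) t v → NFRmodE R E Δ v →
        EqE E Δ u v)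
      ↔ ECoherent R E) := by
  constructor
  · -- normal-form agreement implies E-coherence
    intro P Δ t₁ t₂ t₃ h12 h13
    obtain ⟨u, hu1, hu2⟩ := exists_nf_rE hEeqv hterm Δ t₃
    have ht₁u : Relation.ReflTransGen (RewRE R E Δ) t₁ u := .head h13 hu1
    obtain ⟨v, hv1, hv2⟩ := exists_nf_rmodE hterm Δ t₂
    have ht₁v : Relation.ReflTransGen (RewRmodE R E Δ) t₁ v := by
      rcases hv1.cases_head with h1 | ⟨t₂', hstep, htail⟩
      · exfalso
        obtain ⟨m, m', hm1, hm2, hm3⟩ := rewRE_rewRmodE hEeqv h13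
        exact (h1 ▸ hv2) ⟨t₃, ⟨m, m', eqE_trans (eqE_symm hEsymm h12) hm1, hm2, hm3⟩⟩
      · obtain ⟨m, m', hm1, hm2, hm3⟩ := hstep
        exact .head ⟨m, m', eqE_trans h12 hm1, hm2, hm3⟩ htail
    have hPuv := P Δ t₁ u v ht₁u hu2 ht₁v hv2
    have ht₂red : ∃ t₅, RewRE R E Δ t₂ t₅ := by
      by_contra h
      have hPt₂ := P Δ t₂ t₂ v .refl h hv1 hv2
      obtain ⟨m, m', hm1, hm2, hm3⟩ := rewRE_rewRmodE hEeqv h13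
      exact hv2 ⟨t₃, ⟨m, m', eqE_trans (eqE_symm hEsymm hPt₂)
        (eqE_trans (eqE_symm hEsymm h12) hm1), hm2, hm3⟩⟩
    obtain ⟨t₅, h25⟩ := ht₂red
    obtain ⟨t₆, h56, h6nf⟩ := exists_nf_rE hEeqv hterm Δ t₅
    have hPt₆ := P Δ t₂ t₆ v (.head h25 h56) h6nf hv1 hv2
    exact ⟨u, t₅, t₆, hu1, h25, h56, eqE_trans hPuv (eqE_symm hEsymm hPt₆)⟩
  · -- E-coherence implies normal-form agreement
    intro hcoh Δ t u v htu hu htv hv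
    exact coh_main hEeqv hEsymm hterm hconf hcoh Δ t htv hv htu hu

end NominalNarrowing
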